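/- arXiv:2206.15439 — 5 statements merged into one kernel-verified Lean document; each statement's English description precedes it below -/
import Mathlib

section
/- For any connected graph G of order n ≥ 3, the connected domination number of the middle graph M(G) equals n − 1. -/
open SimpleGraph

/-- `S` is a dominating set of `H`: every vertex is in `S` or adjacent to a vertex of `S`. -/
def IsDomSet {V : Type*} (H : SimpleGraph V) (S : Set V) : Prop :=
  ∀ v : V, ∃ u ∈ S, u = v ∨ H.Adj u v

/-- The connected domination number: minimum size of a dominating set inducing a
connected subgraph. -/
noncomputable def connDomNum {V : Type*} (H : SimpleGraph V) : ℕ :=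
  sInf {k | ∃ S : Set V, IsDomSet H S ∧ (H.induce S).Connected ∧ S.ncard = k}

/-- The outer-connected domination number: minimum size of a dominating set whose
complement induces a connected subgraph. -/
noncomputable def outConnDomNum {V : Type*} (H : SimpleGraph V) : ℕ :=
  sInf {k | ∃ S : Set V, IsDomSet H S ∧ (H.induce Sᶜ).Connected ∧ S.ncard = k}

/-- The middle graph `M(G)`: vertices are `V(G) ∪ E(G)`; a vertex is adjacent to its
incident edges, and two edges are adjacent iff they share a vertex. -/
def middleGraph {V : Type*} (G : SimpleGraph V) : SimpleGraph (V ⊕ G.edgeSet) where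
  Adj x y :=
    match x, y with
    | Sum.inl _, Sum.inl _ => False
    | Sum.inl v, Sum.inr e => v ∈ (e : Sym2 V)
    | Sum.inr e, Sum.inl v => v ∈ (e : Sym2 V)
    | Sum.inr e, Sum.inr f => e ≠ f ∧ ∃ v, v ∈ (e : Sym2 V) ∧ v ∈ (f : Sym2 V)
  symm := by
    constructor
    rintro (v | e) (w | f) h
    · exact h.elim
    · exact h
    · exact h
    · exact ⟨Ne.symm h.1, h.2.imp fun v hv => ⟨hv.2, hv.1⟩⟩
  loopless := by
    constructor
    rintro (v | e) h
    · exact h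
    · exact h.1 rfl

/-- The edge cover number `ρ(G)`: minimum number of edges covering all vertices. -/
noncomputable def edgeCoverNum {V : Type*} (G : SimpleGraph V) : ℕ :=
  sInf {k | ∃ C : Set (Sym2 V), C ⊆ G.edgeSet ∧ (∀ v : V, ∃ e ∈ C, v ∈ e) ∧ C.ncard = k}

/-- The wheel graph with hub `none` and a cycle on `ZMod n` (so `n + 1` vertices). -/
def wheelGraph (n : ℕ) : SimpleGraph (Option (ZMod n)) where
  Adj x y :=
    match x, y with
    | none, none => False
    | none, some _ => True
    | some _, none => True
    | some i, some j => i ≠ j ∧ (i - j = 1 ∨ j - i = 1)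
  symm := by
    constructor
    rintro (_ | i) (_ | j) h
    · exact h.elim
    · trivial
    · trivial
    · exact ⟨h.1.symm, h.2.symm⟩
  loopless := by
    constructor
    rintro (_ | i) h
    · exact h
    · exact h.1 rfl

/-- The friendship graph `F n`: `n` triangles sharing the common vertex `none`. -/
def friendshipGraph (n : ℕ) : SimpleGraph (Option (Fin n × Fin 2)) where
  Adj x y :=
    match x, y with
    | none, none => False
    | none, some _ => True
    | some _, none => True
    | some (i, a), some (j, b) => i = j ∧ a ≠ b
  symm := by
    constructor
    rintro (_ | ⟨i, a⟩) (_ | ⟨j, b⟩) h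
    · exact h.elim
    · trivial
    · trivial
    · exact ⟨h.1.symm, h.2.symm⟩
  loopless := by
    constructor
    rintro (_ | ⟨i, a⟩) h
    · exact h
    · exact h.2 rfl

/-- The corona `G ∘ K₁`: each vertex `Sum.inl v` of `G` gets a pendant vertex `Sum.inr v`. -/
def corona {V : Type*} (G : SimpleGraph V) : SimpleGraph (V ⊕ V) where
  Adj x y :=
    match x, y with
    | Sum.inl v, Sum.inl w => G.Adj v w
    | Sum.inl v, Sum.inr w => v = w
    | Sum.inr v, Sum.inl w => v = w
    | Sum.inr _, Sum.inr _ => False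
  symm := by
    constructor
    rintro (v | v) (w | w) h
    · exact G.adj_symm h
    · exact h.symm
    · exact h.symm
    · exact h.elim
  loopless := by
    constructor
    rintro (v | v) h
    · exact G.loopless.irrefl v h
    · exact h

/-- The 2-corona `G ∘ P₂`: each vertex `Sum.inl v` of `G` gets a pendant path
`Sum.inl v — Sum.inr (Sum.inl v) — Sum.inr (Sum.inr v)`. -/
def corona2 {V : Type*} (G : SimpleGraph V) : SimpleGraph (V ⊕ (V ⊕ V)) where
  Adj x y :=
    match x, y with
    | Sum.inl v, Sum.inl w => G.Adj v w
    | Sum.inl v, Sum.inr (Sum.inl w) => v = w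
    | Sum.inr (Sum.inl v), Sum.inl w => v = w
    | Sum.inr (Sum.inl v), Sum.inr (Sum.inr w) => v = w
    | Sum.inr (Sum.inr v), Sum.inr (Sum.inl w) => v = w
    | _, _ => False
  symm := by
    constructor
    rintro (v | v | v) (w | w | w) h
    · exact G.adj_symm h
    · exact h.symm
    · exact h.elim
    · exact h.symm
    · exact h.elim
    · exact h.symm
    · exact h.elim
    · exact h.symm
    · exact h.elim
  loopless := by
    constructor
    rintro (v | v | v) h
    · exact G.loopless.irrefl v h
    · exact h
    · exact h

/-- The join `G + K̄ p` of `G` with the empty graph on `p` vertices. -/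
def joinEmpty {V : Type*} (G : SimpleGraph V) (p : ℕ) : SimpleGraph (V ⊕ Fin p) where
  Adj x y :=
    match x, y with
    | Sum.inl v, Sum.inl w => G.Adj v w
    | Sum.inl _, Sum.inr _ => True
    | Sum.inr _, Sum.inl _ => True
    | Sum.inr _, Sum.inr _ => False
  symm := by
    constructor
    rintro (v | v) (w | w) h
    · exact G.adj_symm h
    · trivial
    · trivial
    · exact h.elim
  loopless := by
    constructor
    rintro (v | v) h
    · exact G.loopless.irrefl v h
    · exact h

section AuxProof

variable {V : Type*} {G : SimpleGraph V}
lemma mg_adj_vv {v w : V} : ¬ (middleGraph G).Adj (Sum.inl v) (Sum.inl w) := fun h => h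
lemma mg_adj_ve {v : V} {e : G.edgeSet} : (middleGraph G).Adj (Sum.inl v) (Sum.inr e) ↔ v ∈ (e : Sym2 V) := Iff.rfl
lemma mg_adj_ev {v : V} {e : G.edgeSet} : (middleGraph G).Adj (Sum.inr e) (Sum.inl v) ↔ v ∈ (e : Sym2 V) := Iff.rfl
lemma mg_adj_ee {e f : G.edgeSet} : (middleGraph G).Adj (Sum.inr e) (Sum.inr f) ↔ e ≠ f ∧ ∃ v, v ∈ (e : Sym2 V) ∧ v ∈ (f : Sym2 V) := Iff.rfl

lemma sym2_eq_of_mem' {a b : V} {e : Sym2 V} (ha : a ∈ e) (hb : b ∈ e) (hab : a ≠ b) :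
    e = s(a,b) := by
  induction e using Sym2.ind with
  | _ x y =>
    rw [Sym2.mem_iff] at ha hb; rw [Sym2.eq_iff]
    rcases ha with rfl | rfl <;> rcases hb with rfl | rfl <;> tauto

lemma exists_closer (H : SimpleGraph V) (hc : H.Connected) (v₀ : V) :
    ∀ v, v ≠ v₀ → ∃ u, H.Adj v u ∧ H.dist u v₀ < H.dist v v₀ := by
  intro v hv
  obtain ⟨p, hp⟩ := hc.exists_walk_length_eq_dist v v₀
  cases p with
  | nil => exact absurd rfl hv
  | cons h' q =>
    refine ⟨_, h', ?_⟩
    have h1 := H.dist_le q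
    have h2 : q.length + 1 = H.dist v v₀ := by simpa using hp
    omega

lemma upper_bound [Fintype V] (G : SimpleGraph V) (hc : G.Connected)
    (h2 : 2 ≤ Fintype.card V) :
    ∃ S : Set (V ⊕ G.edgeSet), IsDomSet (middleGraph G) S ∧
      ((middleGraph G).induce S).Connected ∧ S.ncard = Fintype.card V - 1 := by
  classical
  have hne : Nonempty V := hc.nonempty
  obtain ⟨v₀⟩ := hne
  choose par hadj hdist using exists_closer G hc v₀
  set f : {v : V // v ≠ v₀} → G.edgeSet :=
    fun v => ⟨s(v.1, par v.1 v.2), G.mem_edgeSet.2 (hadj v.1 v.2)⟩ with hf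
  have hinj : Function.Injective f := by
    rintro ⟨a, ha⟩ ⟨b, hb⟩ hab
    have h2 : s(a, par a ha) = s(b, par b hb) := congrArg Subtype.val hab
    rw [Sym2.eq_iff] at h2
    rcases h2 with ⟨rfl, -⟩ | ⟨rfl, h4⟩
    · rfl
    · exfalso
      have d1 := hdist (par b hb) ha
      have d2 := hdist b hb
      rw [h4] at d1
      omega
  -- a neighbor of v₀
  have hnt : Nontrivial V := Fintype.one_lt_card_iff_nontrivial.mp (by omega)
  obtain ⟨w, hw⟩ := exists_ne v₀
  obtain ⟨pw, hpw⟩ := hc.exists_walk_length_eq_dist v₀ w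
  obtain ⟨u₀, h0adj⟩ : ∃ u, G.Adj v₀ u := by
    cases pw with
    | nil => exact absurd rfl hw.symm
    | cons h' q => exact ⟨_, h'⟩
  have hu₀ : u₀ ≠ v₀ := h0adj.ne'
  have hdu : G.dist u₀ v₀ = 1 := SimpleGraph.dist_eq_one_iff_adj.2 h0adj.symm
  have hpar_u₀ : par u₀ hu₀ = v₀ := by
    have hd := hdist u₀ hu₀
    rw [hdu] at hd
    have h0 : G.dist (par u₀ hu₀) v₀ = 0 := by omega
    exact hc.dist_eq_zero_iff.1 h0
  set S : Set (V ⊕ G.edgeSet) := Sum.inr '' (Set.range f) with hS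
  have hmem : ∀ v : {v : V // v ≠ v₀}, Sum.inr (f v) ∈ S := fun v => ⟨f v, ⟨v, rfl⟩, rfl⟩
  have hv₀mem : v₀ ∈ ((f ⟨u₀, hu₀⟩ : G.edgeSet) : Sym2 V) := by
    show v₀ ∈ s(u₀, par u₀ hu₀)
    rw [hpar_u₀]
    exact Sym2.mem_mk_right _ _
  have hvmem : ∀ (v) (hv : v ≠ v₀), v ∈ ((f ⟨v, hv⟩ : G.edgeSet) : Sym2 V) :=
    fun v hv => Sym2.mem_mk_left _ _
  refine ⟨S, ?_, ?_, ?_⟩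
  · -- domination
    rintro (v | e)
    · by_cases hv : v = v₀
      · subst hv
        exact ⟨Sum.inr (f ⟨u₀, hu₀⟩), hmem _, Or.inr (mg_adj_ev.2 hv₀mem)⟩
      · exact ⟨Sum.inr (f ⟨v, hv⟩), hmem _, Or.inr (mg_adj_ev.2 (hvmem v hv))⟩
    · have key : ∀ z : Sym2 V, z = (e : Sym2 V) →
          ∃ u ∈ S, u = Sum.inr e ∨ (middleGraph G).Adj u (Sum.inr e) := by
        intro z
        induction z using Sym2.ind with
        | _ a b =>
          intro hz
          have hab : G.Adj a b := G.mem_edgeSet.1 (hz ▸ e.2)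
          by_cases ha : a = v₀
          · have hb : b ≠ v₀ := fun h => hab.ne (ha.trans h.symm)
            refine ⟨Sum.inr (f ⟨b, hb⟩), hmem _, ?_⟩
            by_cases heq : f ⟨b, hb⟩ = e
            · exact Or.inl (congrArg Sum.inr heq)
            · exact Or.inr (mg_adj_ee.2 ⟨heq, b, hvmem b hb, by rw [← hz]; exact Sym2.mem_mk_right _ _⟩)
          · refine ⟨Sum.inr (f ⟨a, ha⟩), hmem _, ?_⟩
            by_cases heq : f ⟨a, ha⟩ = e
            · exact Or.inl (congrArg Sum.inr heq)
            · exact Or.inr (mg_adj_ee.2 ⟨heq, a, hvmem a ha, by rw [← hz]; exact Sym2.mem_mk_left _ _⟩)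
      exact key _ rfl
  · -- connectivity
    have key : ∀ k (v : V) (hv : v ≠ v₀), G.dist v v₀ ≤ k →
        ((middleGraph G).induce S).Reachable ⟨Sum.inr (f ⟨v, hv⟩), hmem _⟩
          ⟨Sum.inr (f ⟨u₀, hu₀⟩), hmem _⟩ := by
      intro k
      induction k with
      | zero =>
        intro v hv h0
        have := hc.pos_dist_of_ne hv
        omega
      | succ k ih =>
        intro v hv h
        by_cases hp : par v hv = v₀
        · have h1 : v₀ ∈ ((f ⟨v, hv⟩ : G.edgeSet) : Sym2 V) := by
            show v₀ ∈ s(v, par v hv); rw [hp]; exact Sym2.mem_mk_right _ _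
          by_cases heq : f ⟨v, hv⟩ = f ⟨u₀, hu₀⟩
          · have hvq : v = u₀ := congrArg Subtype.val (hinj heq)
            subst hvq
            exact Reachable.refl _
          · exact SimpleGraph.Adj.reachable
              (show (middleGraph G).Adj (Sum.inr (f ⟨v, hv⟩)) (Sum.inr (f ⟨u₀, hu₀⟩)) from
                mg_adj_ee.2 ⟨heq, v₀, h1, hv₀mem⟩)
        · have hdp := hdist v hv
          have hle : G.dist (par v hv) v₀ ≤ k := by omega
          have hr1 := ih (par v hv) hp hle
          refine Reachable.trans ?_ hr1
          by_cases heq : f ⟨v, hv⟩ = f ⟨par v hv, hp⟩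
          · exfalso
            have hd := hdist v hv
            have hveq : v = par v hv := congrArg Subtype.val (hinj heq)
            rw [← hveq] at hd
            omega
          · exact SimpleGraph.Adj.reachable
              (show (middleGraph G).Adj (Sum.inr (f ⟨v, hv⟩)) (Sum.inr (f ⟨par v hv, hp⟩)) from
                mg_adj_ee.2 ⟨heq, par v hv,
                  (Sym2.mem_mk_right _ _ : par v hv ∈ s(v, par v hv)), Sym2.mem_mk_left _ _⟩)
    rw [connected_iff]
    refine ⟨?_, ?_⟩
    · intro x y
      obtain ⟨e1, ⟨a1, rfl⟩, h1⟩ := x.2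
      obtain ⟨e2, ⟨a2, rfl⟩, h2'⟩ := y.2
      have hx : x = ⟨Sum.inr (f a1), hmem a1⟩ := Subtype.ext h1.symm
      have hy : y = ⟨Sum.inr (f a2), hmem a2⟩ := Subtype.ext h2'.symm
      rw [hx, hy]
      obtain ⟨v1, hv1⟩ := a1
      obtain ⟨v2, hv2⟩ := a2
      exact (key _ v1 hv1 le_rfl).trans (key _ v2 hv2 le_rfl).symm
    · exact ⟨⟨Sum.inr (f ⟨u₀, hu₀⟩), hmem _⟩⟩
  · -- cardinality
    have h1 : S.ncard = Fintype.card {v : V // v ≠ v₀} := by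
      rw [hS, Set.ncard_image_of_injective _ Sum.inr_injective, ← Set.image_univ,
        Set.ncard_image_of_injective _ hinj, Set.ncard_univ, Nat.card_eq_fintype_card]
    rw [h1, Fintype.card_subtype_compl, Fintype.card_subtype_eq]

lemma aux_count [Fintype V] (H : SimpleGraph V) (hc : H.Connected) :
    Fintype.card V ≤ H.edgeSet.ncard + 1 := by
  classical
  obtain ⟨v₀⟩ := hc.nonempty
  choose par hadj hdist using exists_closer H hc v₀
  set f : {v : V // v ≠ v₀} → H.edgeSet :=
    fun v => ⟨s(v.1, par v.1 v.2), H.mem_edgeSet.2 (hadj v.1 v.2)⟩ with hf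
  have hinj : Function.Injective f := by
    rintro ⟨a, ha⟩ ⟨b, hb⟩ hab
    have h2 : s(a, par a ha) = s(b, par b hb) := congrArg Subtype.val hab
    rw [Sym2.eq_iff] at h2
    rcases h2 with ⟨rfl, -⟩ | ⟨rfl, h4⟩
    · rfl
    · exfalso
      have d1 := hdist (par b hb) ha
      have d2 := hdist b hb
      rw [h4] at d1
      omega
  have hcard : Fintype.card {v : V // v ≠ v₀} ≤ H.edgeSet.ncard := by
    rw [← Nat.card_coe_set_eq, ← Nat.card_eq_fintype_card]
    exact Nat.card_le_card_of_injective f hinj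
  have hc1 : Fintype.card {v : V // v ≠ v₀} = Fintype.card V - 1 := by
    rw [Fintype.card_subtype_compl, Fintype.card_subtype_eq]
  have hpos : 1 ≤ Fintype.card V := @Fintype.card_pos _ _ ⟨v₀⟩
  omega

def touch {G : SimpleGraph V} : (V ⊕ G.edgeSet) → V → Prop
  | Sum.inl w, a => a = w
  | Sum.inr e, a => a ∈ (e : Sym2 V)

lemma exists_adj_of_reachable {X : Type*} (H : SimpleGraph X) {x y : X}
    (h : H.Reachable x y) (hne : x ≠ y) : ∃ z, H.Adj x z := by
  obtain ⟨p⟩ := h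
  cases p with
  | nil => exact absurd rfl hne
  | cons h q => exact ⟨_, h⟩

lemma lower_bound [Fintype V] (G : SimpleGraph V) (h2 : 2 ≤ Fintype.card V)
    (S : Set (V ⊕ G.edgeSet)) (hdom : IsDomSet (middleGraph G) S)
    (hconn : ((middleGraph G).induce S).Connected) :
    Fintype.card V - 1 ≤ S.ncard := by
  classical
  have hnt : Nontrivial V := Fintype.one_lt_card_iff_nontrivial.mp (by omega)
  set SE₀ : Set G.edgeSet := {e | Sum.inr e ∈ S} with hSE₀
  set SE : Set (Sym2 V) := Subtype.val '' SE₀ with hSE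
  set H : SimpleGraph V := SimpleGraph.fromEdgeSet SE with hH
  have stepA : ∀ v : V, Sum.inl v ∈ S → ∃ e ∈ SE₀, v ∈ (e : Sym2 V) := by
    intro v hv
    have hex : ∃ y, y ∈ S ∧ y ≠ Sum.inl v := by
      by_contra hno
      push_neg at hno
      obtain ⟨w, hw⟩ := exists_ne v
      obtain ⟨u, hu, hcase⟩ := hdom (Sum.inl w)
      have hu' := hno u hu
      subst hu'
      rcases hcase with h | h
      · exact hw (Sum.inl_injective h).symm
      · exact mg_adj_vv h
    obtain ⟨y, hy, hyne⟩ := hex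
    have hr := hconn.preconnected ⟨Sum.inl v, hv⟩ ⟨y, hy⟩
    obtain ⟨z, hz⟩ := exists_adj_of_reachable _ hr
      (fun h => hyne (congrArg Subtype.val h).symm)
    obtain ⟨zv, hzS⟩ := z
    cases zv with
    | inl w => exact (mg_adj_vv (V := V) (G := G) (v := v) (w := w) hz).elim
    | inr e => exact ⟨e, hzS, hz⟩
  have stepB : ∀ v : V, ∃ e ∈ SE₀, v ∈ (e : Sym2 V) := by
    intro v
    obtain ⟨u, hu, hcase⟩ := hdom (Sum.inl v)
    rcases hcase with h | h
    · subst h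
      exact stepA v hu
    · cases u with
      | inl w => exact absurd h mg_adj_vv
      | inr e => exact ⟨e, hu, h⟩
  have hreach_within : ∀ (e : G.edgeSet), e ∈ SE₀ → ∀ a b : V,
      a ∈ (e : Sym2 V) → b ∈ (e : Sym2 V) → H.Reachable a b := by
    intro e he a b ha hb
    by_cases hab : a = b
    · subst hab; exact Reachable.refl _
    · apply SimpleGraph.Adj.reachable
      rw [hH, fromEdgeSet_adj]
      refine ⟨?_, hab⟩
      have hE : (e : Sym2 V) = s(a, b) := sym2_eq_of_mem' ha hb hab
      rw [← hE]
      exact ⟨e, he, rfl⟩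
  have walkstep : ∀ (x y : ↥S) (p : ((middleGraph G).induce S).Walk x y) (a b : V),
      touch x.1 a → touch y.1 b → H.Reachable a b := by
    intro x y p
    induction p with
    | @nil u =>
      obtain ⟨uv, hu⟩ := u
      cases uv with
      | inl w =>
        intro a b ha hb
        have ha' : a = w := ha
        have hb' : b = w := hb
        rw [ha', hb']
      | inr e =>
        intro a b ha hb
        exact hreach_within e hu a b ha hb
    | @cons ux uz uy h q hq =>
      intro a b ha hb
      obtain ⟨xv, hx⟩ := ux
      obtain ⟨zv, hz⟩ := uz
      cases xv with
      | inl v =>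
        cases zv with
        | inl w => exact (mg_adj_vv (V := V) (G := G) (v := v) (w := w) h).elim
        | inr e =>
          have ha' : a = v := ha
          have hve : v ∈ (e : Sym2 V) := h
          exact ha' ▸ hq v b hve hb
      | inr e =>
        cases zv with
        | inl w =>
          have hwe : w ∈ (e : Sym2 V) := h
          exact (hreach_within e hx a w ha hwe).trans (hq w b rfl hb)
        | inr e2 =>
          obtain ⟨-, u, hu1, hu2⟩ := mg_adj_ee.1 h
          exact (hreach_within e hx a u ha hu1).trans (hq u b hu2 hb)
  have hHconn : H.Connected := by
    rw [connected_iff]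
    refine ⟨?_, ⟨Classical.arbitrary V⟩⟩
    intro a b
    obtain ⟨ea, hea, haa⟩ := stepB a
    obtain ⟨eb, heb, hbb⟩ := stepB b
    obtain ⟨p⟩ := hconn.preconnected ⟨Sum.inr ea, hea⟩ ⟨Sum.inr eb, heb⟩
    exact walkstep _ _ p a b haa hbb
  have hcount := aux_count H hHconn
  have hE : H.edgeSet.ncard ≤ SE.ncard := by
    apply Set.ncard_le_ncard _ (Set.toFinite _)
    rw [hH, edgeSet_fromEdgeSet]
    exact Set.diff_subset
  have h1 : SE.ncard = SE₀.ncard := Set.ncard_image_of_injective _ Subtype.val_injective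
  have h2' : SE₀.ncard ≤ S.ncard := by
    have hsub : Sum.inr '' SE₀ ⊆ S := by
      rintro _ ⟨e, he, rfl⟩
      exact he
    calc SE₀.ncard = (Sum.inr '' SE₀).ncard :=
          (Set.ncard_image_of_injective _ Sum.inr_injective).symm
      _ ≤ S.ncard := Set.ncard_le_ncard hsub (Set.toFinite _)
  omega

end AuxProof

theorem stmt0 {V : Type*} [Fintype V] (G : SimpleGraph V) (n : ℕ)
    (hn : Fintype.card V = n) (h3 : 3 ≤ n) (hc : G.Connected) :
    connDomNum (middleGraph G) = n - 1 := by
  subst hn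
  obtain ⟨S, h1, h2', h3'⟩ := upper_bound G hc (by omega)
  apply le_antisymm
  · exact Nat.sInf_le ⟨S, h1, h2', h3'⟩
  · refine le_csInf ⟨Fintype.card V - 1, S, h1, h2', h3'⟩ ?_
    rintro k ⟨T, hT1, hT2, rfl⟩
    exact lower_bound G (by omega) T hT1 hT2
end

section
/- For any tree T of order n ≥ 2, γ̃_c(L(T)) < γ̃_c(M(T)), where L(T) is the line graph of T and M(T) is the middle graph of T. -/
open SimpleGraph

section AuxStmt4

variable {V : Type*}

/-- The set of endpoints of a middle-graph vertex. -/
def mEnds {G : SimpleGraph V} : V ⊕ G.edgeSet → Set V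
  | Sum.inl v => {v}
  | Sum.inr e => {z | z ∈ (e : Sym2 V)}

lemma midAdjShare {G : SimpleGraph V} {x y : V ⊕ G.edgeSet}
    (h : (middleGraph G).Adj x y) : ∃ c, c ∈ mEnds x ∧ c ∈ mEnds y := by
  match x, y with
  | Sum.inl v, Sum.inl w => exact h.elim
  | Sum.inl v, Sum.inr e => exact ⟨v, rfl, h⟩
  | Sum.inr e, Sum.inl v => exact ⟨v, h, rfl⟩
  | Sum.inr e, Sum.inr f =>
      obtain ⟨-, c, hc1, hc2⟩ := h
      exact ⟨c, hc1, hc2⟩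

lemma endsReach {G : SimpleGraph V} {S : Set (V ⊕ G.edgeSet)} {B : Set (Sym2 V)}
    (hB : ∀ e : G.edgeSet, (Sum.inr e : V ⊕ G.edgeSet) ∉ S → (e : Sym2 V) ∈ B)
    {z : V ⊕ G.edgeSet} (hz : z ∉ S) {u w : V} (hu : u ∈ mEnds z) (hw : w ∈ mEnds z) :
    (SimpleGraph.fromEdgeSet B).Reachable u w := by
  match z with
  | Sum.inl v =>
    have hu' : u = v := hu
    have hw' : w = v := hw
    subst hu'; subst hw'
    exact Reachable.refl _
  | Sum.inr e =>
    rcases eq_or_ne u w with rfl | hne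
    · exact Reachable.refl _
    · apply SimpleGraph.Adj.reachable
      rw [SimpleGraph.fromEdgeSet_adj]
      refine ⟨?_, hne⟩
      have he : (e : Sym2 V) = s(u, w) := (Sym2.mem_and_mem_iff hne).mp ⟨hu, hw⟩
      rw [← he]
      exact hB e hz

lemma midWalkReach {G : SimpleGraph V} {S : Set (V ⊕ G.edgeSet)} {B : Set (Sym2 V)}
    (hB : ∀ e : G.edgeSet, (Sum.inr e : V ⊕ G.edgeSet) ∉ S → (e : Sym2 V) ∈ B)
    {x y : ↥Sᶜ} (p : ((middleGraph G).induce Sᶜ).Walk x y) :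
    ∀ {u w : V}, u ∈ mEnds x.val → w ∈ mEnds y.val →
      (SimpleGraph.fromEdgeSet B).Reachable u w := by
  induction p with
  | nil =>
    intro u w hu hw
    rename_i z
    exact endsReach hB z.property hu hw
  | cons h q ih =>
    intro u w hu hw
    rename_i z₁ z₂ _
    have h' : (middleGraph G).Adj z₁.val z₂.val := h
    obtain ⟨c, hcx, hcz⟩ := midAdjShare h'
    exact (endsReach hB z₁.property hu hcx).trans (ih hcz hw)

lemma middle_lower [Fintype V] {T : SimpleGraph V} (hT : T.IsTree)
    {S : Set (V ⊕ T.edgeSet)} (hdom : IsDomSet (middleGraph T) S)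
    (hconn : ((middleGraph T).induce Sᶜ).Connected) :
    Fintype.card V ≤ S.ncard := by
  classical
  haveI hfinE : Finite ↥T.edgeSet := (Set.toFinite T.edgeSet).to_subtype
  haveI hfinS : Finite ↥S := (Set.toFinite S).to_subtype
  have hpick : ∀ v : V, (Sum.inl v : V ⊕ T.edgeSet) ∉ S →
      ∃ e : T.edgeSet, (Sum.inr e : V ⊕ T.edgeSet) ∈ S ∧ v ∈ (e : Sym2 V) := by
    intro v hv
    obtain ⟨u, huS, hu⟩ := hdom (Sum.inl v)
    rcases hu with rfl | hadj
    · exact absurd huS hv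
    · match u, huS, hadj with
      | Sum.inl w, huS, hadj => exact hadj.elim
      | Sum.inr e, huS, hadj => exact ⟨e, huS, hadj⟩
  choose pick hpickS hpickMem using hpick
  have key : ∀ v w : V, v ≠ w → ∀ (hv : (Sum.inl v : V ⊕ T.edgeSet) ∉ S)
      (hw : (Sum.inl w : V ⊕ T.edgeSet) ∉ S), pick v hv ≠ pick w hw := by
    intro v w hvw hv hw heq
    have hvmem := hpickMem v hv
    have hwmem : w ∈ ((pick v hv : T.edgeSet) : Sym2 V) := by
      rw [heq]; exact hpickMem w hw
    have hEdge : ((pick v hv : T.edgeSet) : Sym2 V) = s(v, w) :=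
      (Sym2.mem_and_mem_iff hvw).mp ⟨hvmem, hwmem⟩
    have hadjvw : T.Adj v w := by
      rw [← SimpleGraph.mem_edgeSet, ← hEdge]
      exact (pick v hv).property
    have hB : ∀ e : T.edgeSet, (Sum.inr e : V ⊕ T.edgeSet) ∉ S →
        (e : Sym2 V) ∈ {s | s ∈ T.edgeSet ∧ s ≠ s(v, w)} := by
      intro e he
      refine ⟨e.property, fun hc => he ?_⟩
      have hee : e = pick v hv := Subtype.ext (by rw [hc, ← hEdge])
      rw [hee]
      exact hpickS v hv
    obtain ⟨p⟩ := hconn.preconnected ⟨Sum.inl v, hv⟩ ⟨Sum.inl w, hw⟩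
    have hreach := midWalkReach hB p (u := v) (w := w) rfl rfl
    have hbridge : T.IsBridge s(v, w) :=
      (SimpleGraph.isAcyclic_iff_forall_adj_isBridge.mp hT.IsAcyclic) hadjvw
    rw [SimpleGraph.isBridge_iff] at hbridge
    refine hbridge (hreach.mono ?_)
    intro a b hab
    rw [SimpleGraph.fromEdgeSet_adj] at hab
    obtain ⟨⟨hmemE, hneE⟩, hne⟩ := hab
    rw [SimpleGraph.deleteEdges_adj]
    constructor
    · exact hmemE
    · exact hneE
  set g : V → ↥S := fun v =>
    if h : (Sum.inl v : V ⊕ T.edgeSet) ∈ S then ⟨Sum.inl v, h⟩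
    else ⟨Sum.inr (pick v h), hpickS v h⟩ with hg
  have ginj : Function.Injective g := by
    intro v w hvw'
    have h2 : (g v : V ⊕ T.edgeSet) = g w := congrArg Subtype.val hvw'
    simp only [hg] at h2
    by_cases hv : (Sum.inl v : V ⊕ T.edgeSet) ∈ S <;>
      by_cases hw : (Sum.inl w : V ⊕ T.edgeSet) ∈ S
    · rw [dif_pos hv, dif_pos hw] at h2
      exact Sum.inl_injective h2
    · rw [dif_pos hv, dif_neg hw] at h2
      exact absurd h2 (by simp)
    · rw [dif_neg hv, dif_pos hw] at h2
      exact absurd h2 (by simp)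
    · rw [dif_neg hv, dif_neg hw] at h2
      by_contra hne
      exact key v w hne hv hw (Sum.inr_injective h2)
  have hle : Nat.card V ≤ Nat.card ↥S := Nat.card_le_card_of_injective g ginj
  rwa [Nat.card_eq_fintype_card, Nat.card_coe_set_eq] at hle

lemma lineWalkReach {G : SimpleGraph V} {v w : V} (p : G.Walk v w) :
    ∀ (e f : G.edgeSet), v ∈ (e : Sym2 V) → w ∈ (f : Sym2 V) →
      G.lineGraph.Reachable e f := by
  induction p with
  | nil =>
    intro e f h1 h2
    rcases eq_or_ne e f with rfl | hne
    · exact Reachable.refl _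
    · exact (SimpleGraph.lineGraph_adj_iff_exists.mpr ⟨hne, _, h1, h2⟩).reachable
  | @cons a b c h q ih =>
    intro e f h1 h2
    have hgmem : s(a, b) ∈ G.edgeSet := h
    have r1 : G.lineGraph.Reachable e ⟨s(a, b), hgmem⟩ := by
      rcases eq_or_ne e ⟨s(a, b), hgmem⟩ with rfl | hne
      · exact Reachable.refl _
      · exact (SimpleGraph.lineGraph_adj_iff_exists.mpr
          ⟨hne, a, h1, Sym2.mem_mk_left a b⟩).reachable
    exact r1.trans (ih ⟨s(a, b), hgmem⟩ f (Sym2.mem_mk_right a b) h2)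

lemma card_edgeSet_of_tree [Fintype V] {T : SimpleGraph V} (hT : T.IsTree) :
    Nat.card ↥T.edgeSet = Fintype.card V - 1 := by
  classical
  letI : Fintype ↥T.edgeSet := (Set.toFinite T.edgeSet).fintype
  have h := hT.card_edgeFinset
  have h2 : T.edgeSet.toFinset.card = T.edgeFinset.card := rfl
  rw [Nat.card_eq_fintype_card, ← Set.toFinset_card, h2]
  omega

lemma middle_range_inl [Fintype V] {T : SimpleGraph V} (hT : T.IsTree)
    (h2 : 2 ≤ Fintype.card V) :
    IsDomSet (middleGraph T) (Set.range Sum.inl) ∧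
    ((middleGraph T).induce (Set.range (Sum.inl : V → V ⊕ T.edgeSet))ᶜ).Connected ∧
    (Set.range (Sum.inl : V → V ⊕ T.edgeSet)).ncard = Fintype.card V := by
  classical
  have hmemC : ∀ e : T.edgeSet,
      (Sum.inr e : V ⊕ T.edgeSet) ∈ (Set.range (Sum.inl : V → V ⊕ T.edgeSet))ᶜ := by
    rintro e ⟨v, hv⟩
    simp at hv
  have step : ∀ (e f : T.edgeSet) (c : V), c ∈ (e : Sym2 V) → c ∈ (f : Sym2 V) →
      ((middleGraph T).induce (Set.range (Sum.inl : V → V ⊕ T.edgeSet))ᶜ).Reachable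
        ⟨Sum.inr e, hmemC e⟩ ⟨Sum.inr f, hmemC f⟩ := by
    intro e f c hc1 hc2
    rcases eq_or_ne e f with rfl | hne
    · exact Reachable.refl _
    · apply SimpleGraph.Adj.reachable
      show (middleGraph T).Adj (Sum.inr e) (Sum.inr f)
      exact ⟨hne, c, hc1, hc2⟩
  have walkstep : ∀ {v w : V} (p : T.Walk v w) (e f : T.edgeSet),
      v ∈ (e : Sym2 V) → w ∈ (f : Sym2 V) →
      ((middleGraph T).induce (Set.range (Sum.inl : V → V ⊕ T.edgeSet))ᶜ).Reachable
        ⟨Sum.inr e, hmemC e⟩ ⟨Sum.inr f, hmemC f⟩ := by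
    intro v w p
    induction p with
    | nil => intro e f h1 h2; exact step e f _ h1 h2
    | @cons a b c h q ih =>
      intro e f h1 h2
      have hgmem : s(a, b) ∈ T.edgeSet := h
      exact (step e ⟨s(a, b), hgmem⟩ a h1 (Sym2.mem_mk_left a b)).trans
        (ih ⟨s(a, b), hgmem⟩ f (Sym2.mem_mk_right a b) h2)
  haveI : Nontrivial V := Fintype.one_lt_card_iff_nontrivial.mp h2
  obtain ⟨a, b, hab⟩ := exists_pair_ne V
  have hE : Nonempty ↥T.edgeSet := by
    obtain ⟨p0⟩ := hT.isConnected.preconnected a b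
    cases p0 with
    | nil => exact absurd rfl hab
    | @cons _ c _ h q => exact ⟨⟨s(a, c), h⟩⟩
  refine ⟨?_, ?_, ?_⟩
  · intro x
    match x with
    | Sum.inl v => exact ⟨Sum.inl v, ⟨v, rfl⟩, Or.inl rfl⟩
    | Sum.inr e =>
      refine ⟨Sum.inl (e : Sym2 V).out.1, ⟨_, rfl⟩, Or.inr ?_⟩
      show (e : Sym2 V).out.1 ∈ (e : Sym2 V)
      exact Sym2.out_fst_mem _
  · obtain ⟨e0⟩ := hE
    haveI : Nonempty ↥(Set.range (Sum.inl : V → V ⊕ T.edgeSet))ᶜ := ⟨⟨Sum.inr e0, hmemC e0⟩⟩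
    constructor
    rintro ⟨x, hx⟩ ⟨y, hy⟩
    match x, hx with
    | Sum.inl v, hx => exact absurd ⟨v, rfl⟩ hx
    | Sum.inr e, hx =>
      match y, hy with
      | Sum.inl v, hy => exact absurd ⟨v, rfl⟩ hy
      | Sum.inr f, hy =>
        obtain ⟨p⟩ := hT.isConnected.preconnected (e : Sym2 V).out.1 (f : Sym2 V).out.1
        exact walkstep p e f (Sym2.out_fst_mem _) (Sym2.out_fst_mem _)
  · rw [← Nat.card_coe_set_eq, Nat.card_range_of_injective Sum.inl_injective,
      Nat.card_eq_fintype_card]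

end AuxStmt4

theorem stmt4 {V : Type*} [Fintype V] (T : SimpleGraph V)
    (h2 : 2 ≤ Fintype.card V) (hT : T.IsTree) :
    outConnDomNum T.lineGraph < outConnDomNum (middleGraph T) := by
  classical
  haveI hfinE : Finite ↥T.edgeSet := (Set.toFinite T.edgeSet).to_subtype
  have hEcard : Nat.card ↥T.edgeSet = Fintype.card V - 1 := card_edgeSet_of_tree hT
  obtain ⟨hdom0, hconn0, hcard0⟩ := middle_range_inl hT h2
  have hRHS : Fintype.card V ≤ outConnDomNum (middleGraph T) := by
    have hne : {k | ∃ S, IsDomSet (middleGraph T) S ∧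
        ((middleGraph T).induce Sᶜ).Connected ∧ S.ncard = k}.Nonempty :=
      ⟨Fintype.card V, Set.range Sum.inl, hdom0, hconn0, hcard0⟩
    obtain ⟨S, hd, hc, hcd⟩ := Nat.sInf_mem hne
    have h1 : Fintype.card V ≤ S.ncard := middle_lower hT hd hc
    rw [hcd] at h1
    exact h1
  rcases lt_or_ge (Fintype.card V) 3 with h3 | h3
  · have hc1 : Nat.card ↥T.edgeSet = 1 := by omega
    haveI hsub : Subsingleton ↥T.edgeSet :=
      (Nat.card_eq_one_iff_unique.mp hc1).1
    have hLHS : outConnDomNum T.lineGraph = 0 := by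
      rw [outConnDomNum]
      convert Nat.sInf_empty
      rw [Set.eq_empty_iff_forall_notMem]
      rintro k ⟨S, hdom, hconn, -⟩
      obtain ⟨⟨x, hx⟩⟩ := hconn.nonempty
      obtain ⟨u, huS, hu⟩ := hdom x
      have hux : u = x := Subsingleton.elim u x
      subst hux
      rcases hu with _ | hadj
      · exact hx huS
      · exact hadj.ne rfl
    omega
  · haveI hnt : Nontrivial ↥T.edgeSet := by
      rw [← Finite.one_lt_card_iff_nontrivial]; omega
    obtain ⟨e, f, hef⟩ := exists_pair_ne ↥T.edgeSet
    have hreach : T.lineGraph.Reachable e f := by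
      obtain ⟨p⟩ := hT.isConnected.preconnected (e : Sym2 V).out.1 (f : Sym2 V).out.1
      exact lineWalkReach p e f (Sym2.out_fst_mem _) (Sym2.out_fst_mem _)
    obtain ⟨g, hg⟩ : ∃ g, T.lineGraph.Adj e g := by
      obtain ⟨p⟩ := hreach
      cases p with
      | nil => exact absurd rfl hef
      | cons h q => exact ⟨_, h⟩
    have hmem : (Nat.card ↥T.edgeSet - 1) ∈ {k | ∃ S, IsDomSet T.lineGraph S ∧
        (T.lineGraph.induce Sᶜ).Connected ∧ S.ncard = k} := by
      refine ⟨({e} : Set ↥T.edgeSet)ᶜ, ?_, ?_, ?_⟩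
      · intro x
        rcases eq_or_ne x e with rfl | hx
        · exact ⟨g, hg.ne', Or.inr hg.symm⟩
        · exact ⟨x, hx, Or.inl rfl⟩
      · rw [compl_compl]
        haveI : Nonempty ↥({e} : Set ↥T.edgeSet) := ⟨⟨e, rfl⟩⟩
        constructor
        rintro ⟨x, hx⟩ ⟨y, hy⟩
        have hxy : x = y := by
          have hx' : x = e := hx
          have hy' : y = e := hy
          rw [hx', hy']
        subst hxy
        rfl
      · have h1 : ({e} : Set ↥T.edgeSet).ncard + (({e} : Set ↥T.edgeSet)ᶜ).ncard
            = Nat.card ↥T.edgeSet := Set.ncard_add_ncard_compl _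
        rw [Set.ncard_singleton] at h1
        omega
    have hLHS : outConnDomNum T.lineGraph ≤ Nat.card ↥T.edgeSet - 1 :=
      Nat.sInf_le hmem
    omega
end

section
/- For the complete graph K_n with n ≥ 3, the outer-connected domination number of the middle graph satisfies γ̃_c(M(K_n)) = ⌈n/2⌉. -/
open SimpleGraph

namespace Stmt6

def F (n : ℕ) (i : Fin ((n+1)/2)) : Fin n ⊕ (⊤ : SimpleGraph (Fin n)).edgeSet :=
  if h : 2 * i.val + 1 < n then
    Sum.inr ⟨s(⟨2 * i.val, by omega⟩, ⟨2 * i.val + 1, h⟩), by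
      simp [Fin.ext_iff]⟩
  else Sum.inl ⟨n - 1, by have := i.isLt; omega⟩

lemma F_inj (n : ℕ) : Function.Injective (F n) := by
  intro i j hij
  apply Fin.ext
  have hi := i.isLt; have hj := j.isLt
  unfold F at hij
  split_ifs at hij with h1 h2 h2 <;>
    simp only [Sum.inr.injEq, Sum.inl.injEq, Subtype.mk.injEq, Sym2.eq_iff,
      Fin.mk.injEq, reduceCtorEq] at hij <;> omega

def S (n : ℕ) : Set (Fin n ⊕ (⊤ : SimpleGraph (Fin n)).edgeSet) := Set.range (F n)

lemma S_ncard (n : ℕ) : (S n).ncard = (n+1)/2 := by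
  rw [S, ← Set.image_univ, Set.ncard_image_of_injective _ (F_inj n), Set.ncard_univ]
  simp

lemma not_mem_S_inl {n : ℕ} (v : Fin n) (h : ¬(n % 2 = 1 ∧ v.val = n - 1)) :
    Sum.inl v ∉ S n := by
  rintro ⟨i, hi⟩
  unfold F at hi
  split_ifs at hi with h1
  have := i.isLt
  rw [Sum.inl.injEq] at hi
  cases hi
  exact h ⟨by omega, rfl⟩

lemma not_mem_S_inr {n : ℕ} (e : (⊤ : SimpleGraph (Fin n)).edgeSet)
    (h : ∀ a b : Fin n, (e : Sym2 (Fin n)) = s(a, b) →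
      a.val % 2 = 0 → b.val ≠ a.val + 1) :
    Sum.inr e ∉ S n := by
  rintro ⟨i, hi⟩
  unfold F at hi
  split_ifs at hi with h1
  rw [Sum.inr.injEq] at hi
  have he : (e : Sym2 (Fin n)) = s(⟨2 * i.val, by omega⟩, ⟨2 * i.val + 1, h1⟩) := by
    rw [← hi]
  exact h _ _ he (by simp [Nat.mul_mod_right]) (by simp)

lemma mem_S_inr {n : ℕ} (E : (⊤ : SimpleGraph (Fin n)).edgeSet) (a b : Fin n)
    (hE : (E : Sym2 (Fin n)) = s(a, b)) (ha : a.val % 2 = 0) (hb : b.val = a.val + 1) :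
    Sum.inr E ∈ S n := by
  have hb' := b.isLt
  have hlt : 2 * (a.val / 2) + 1 < n := by omega
  refine ⟨⟨a.val / 2, by omega⟩, ?_⟩
  unfold F
  split_ifs with h
  · refine congrArg Sum.inr (Subtype.ext ?_)
    rw [hE, Sym2.eq_iff]
    exact Or.inl ⟨Fin.ext (show 2 * (a.val / 2) = a.val by omega),
      Fin.ext (show 2 * (a.val / 2) + 1 = b.val by omega)⟩
  · exact absurd hlt h

lemma dom (n : ℕ) : IsDomSet (middleGraph (⊤ : SimpleGraph (Fin n))) (S n) := by
  rintro (v | ⟨e, he⟩)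
  · have hin : v.val / 2 < (n+1)/2 := by have := v.isLt; omega
    refine ⟨F n ⟨v.val / 2, hin⟩, ⟨_, rfl⟩, ?_⟩
    unfold F
    simp only
    split_ifs with h1
    · right
      show (v : Fin n) ∈ (s(⟨2 * (v.val / 2), by omega⟩, ⟨2 * (v.val / 2) + 1, h1⟩) : Sym2 (Fin n))
      rw [Sym2.mem_iff]
      have hv := v.isLt
      rcases Nat.lt_or_ge v.val (2 * (v.val / 2) + 1) with h | h
      · left; apply Fin.ext; simp; omega
      · right; apply Fin.ext; simp; omega
    · left
      have := v.isLt
      congr 1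
      apply Fin.ext
      simp
      omega
  · induction e using Sym2.ind with
    | _ a b =>
      have hab : a ≠ b := by
        rw [SimpleGraph.mem_edgeSet, SimpleGraph.top_adj] at he
        exact he
      have hin : a.val / 2 < (n+1)/2 := by have := a.isLt; omega
      refine ⟨F n ⟨a.val / 2, hin⟩, ⟨_, rfl⟩, ?_⟩
      unfold F
      simp only
      split_ifs with h1
      · have hmem : a ∈ (s(⟨2 * (a.val / 2), by omega⟩, ⟨2 * (a.val / 2) + 1, h1⟩) : Sym2 (Fin n)) := by
          rw [Sym2.mem_iff]
          have hv := a.isLt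
          rcases Nat.lt_or_ge a.val (2 * (a.val / 2) + 1) with h | h
          · left; apply Fin.ext; simp; omega
          · right; apply Fin.ext; simp; omega
        by_cases heq : (s(⟨2 * (a.val / 2), by omega⟩, ⟨2 * (a.val / 2) + 1, h1⟩) : Sym2 (Fin n)) = s(a, b)
        · left
          exact congrArg Sum.inr (Subtype.ext heq)
        · right
          exact ⟨fun hc => heq (congrArg Subtype.val hc), a, hmem, Sym2.mem_mk_left a b⟩
      · right
        have hv := a.isLt
        show (⟨n - 1, _⟩ : Fin n) ∈ (s(a, b) : Sym2 (Fin n))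
        rw [Sym2.mem_iff]
        left
        apply Fin.ext
        simp
        omega

lemma conn (n : ℕ) (h3 : 3 ≤ n) :
    ((middleGraph (⊤ : SimpleGraph (Fin n))).induce (S n)ᶜ).Connected := by
  classical
  set M := middleGraph (⊤ : SimpleGraph (Fin n)) with hM
  set H := M.induce (S n)ᶜ with hH
  let v0 : Fin n := ⟨0, by omega⟩
  let v1 : Fin n := ⟨1, by omega⟩
  let v2 : Fin n := ⟨2, by omega⟩
  have hedge : ∀ a b : Fin n, a ≠ b → s(a, b) ∈ (⊤ : SimpleGraph (Fin n)).edgeSet := by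
    intro a b h
    rwa [SimpleGraph.mem_edgeSet, SimpleGraph.top_adj]
  -- edges {0, j} with j ≥ 2 are outside S
  have star_not_mem : ∀ (E : (⊤ : SimpleGraph (Fin n)).edgeSet) (j : Fin n), 2 ≤ j.val →
      (E : Sym2 (Fin n)) = s(v0, j) → Sum.inr E ∈ (S n)ᶜ := by
    intro E j hj hE
    apply not_mem_S_inr
    intro a b hab ha hb
    rw [hE, Sym2.eq_iff] at hab
    rcases hab with ⟨h1, h2⟩ | ⟨h1, h2⟩
    · have ha0 : a.val = 0 := by rw [← h1]
      have hb0 : b.val = j.val := by rw [← h2]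
      omega
    · have ha0 : a.val = j.val := by rw [← h2]
      have hb0 : b.val = 0 := by rw [← h1]
      omega
  set e02 : (⊤ : SimpleGraph (Fin n)).edgeSet :=
    ⟨s(v0, v2), hedge _ _ (Fin.ne_of_val_ne (show (0:ℕ) ≠ 2 by omega))⟩ with he02
  have h0c : Sum.inr e02 ∈ (S n)ᶜ := star_not_mem e02 v2 (Nat.le_refl 2) rfl
  set x0 : ↥((S n)ᶜ) := ⟨Sum.inr e02, h0c⟩ with hx0
  -- reach x0 from any star edge {0, j}, j ≥ 2
  have reachStar : ∀ (E : (⊤ : SimpleGraph (Fin n)).edgeSet) (j : Fin n) (hj : 2 ≤ j.val),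
      (E : Sym2 (Fin n)) = s(v0, j) → ∀ hE : Sum.inr E ∈ (S n)ᶜ,
      H.Reachable ⟨Sum.inr E, hE⟩ x0 := by
    intro E j hj hEv hE
    by_cases hj2 : j = v2
    · subst hj2
      have : (⟨Sum.inr E, hE⟩ : ↥((S n)ᶜ)) = x0 := by
        apply Subtype.ext
        exact congrArg Sum.inr (Subtype.ext (by rw [hEv]))
      rw [this]
    · apply SimpleGraph.Adj.reachable
      show M.Adj (Sum.inr E) (Sum.inr e02)
      refine ⟨fun hc => hj2 ?_, v0, ?_, ?_⟩
      · have : (E : Sym2 (Fin n)) = s(v0, v2) := congrArg Subtype.val hc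
        rw [hEv, Sym2.eq_iff] at this
        rcases this with ⟨_, h2⟩ | ⟨h1, _⟩
        · exact h2
        · exact absurd (congrArg Fin.val h1) (by simp [v0, v2])
      · rw [hEv]; exact Sym2.mem_mk_left _ _
      · exact Sym2.mem_mk_left _ _
  have main : ∀ x : ↥((S n)ᶜ), H.Reachable x x0 := by
    rintro ⟨(v | ⟨e, he⟩), hx⟩
    · by_cases hv0 : v.val = 0
      · apply SimpleGraph.Adj.reachable
        show M.Adj (Sum.inl v) (Sum.inr e02)
        show v ∈ (s(v0, v2) : Sym2 (Fin n))
        rw [Sym2.mem_iff]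
        exact Or.inl (Fin.ext hv0)
      by_cases hv1 : v.val = 1
      · set e12 : (⊤ : SimpleGraph (Fin n)).edgeSet :=
          ⟨s(v1, v2), hedge _ _ (Fin.ne_of_val_ne (show (1:ℕ) ≠ 2 by omega))⟩ with he12
        have h12c : Sum.inr e12 ∈ (S n)ᶜ := by
          apply not_mem_S_inr
          intro a b hab ha hb
          rw [Sym2.eq_iff] at hab
          rcases hab with ⟨h1, h2⟩ | ⟨h1, h2⟩
          · have : a.val = 1 := congrArg Fin.val h1.symm
            omega
          · have ha2 : a.val = 2 := congrArg Fin.val h2.symm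
            have hb1 : b.val = 1 := congrArg Fin.val h1.symm
            omega
        refine (SimpleGraph.Adj.reachable ?_).trans
          (SimpleGraph.Adj.reachable (?_ : H.Adj ⟨Sum.inr e12, h12c⟩ x0))
        · show M.Adj (Sum.inl v) (Sum.inr e12)
          show v ∈ (s(v1, v2) : Sym2 (Fin n))
          rw [Sym2.mem_iff]
          exact Or.inl (Fin.ext hv1)
        · show M.Adj (Sum.inr e12) (Sum.inr e02)
          refine ⟨fun hc => ?_, v2, Sym2.mem_mk_right _ _, Sym2.mem_mk_right _ _⟩
          have h' : (s(v1, v2) : Sym2 (Fin n)) = s(v0, v2) := congrArg Subtype.val hc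
          rw [Sym2.eq_iff] at h'
          rcases h' with ⟨h1, _⟩ | ⟨h1, _⟩
          · have h1' : (1:ℕ) = 0 := congrArg Fin.val h1
            omega
          · have h1' : (1:ℕ) = 2 := congrArg Fin.val h1
            omega
      · -- v.val ≥ 2
        have hv2 : 2 ≤ v.val := by omega
        set e0v : (⊤ : SimpleGraph (Fin n)).edgeSet :=
          ⟨s(v0, v), hedge _ _ (Fin.ne_of_val_ne (show (0:ℕ) ≠ v.val by omega))⟩ with he0v
        have h0vc : Sum.inr e0v ∈ (S n)ᶜ := star_not_mem e0v v hv2 rfl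
        refine (SimpleGraph.Adj.reachable ?_).trans (reachStar e0v v hv2 rfl h0vc)
        show M.Adj (Sum.inl v) (Sum.inr e0v)
        show v ∈ (s(v0, v) : Sym2 (Fin n))
        exact Sym2.mem_mk_right _ _
    · obtain ⟨a, b, hab⟩ : ∃ a b : Fin n, e = s(a, b) := by
        induction e using Sym2.ind with | _ a b => exact ⟨a, b, rfl⟩
      have hne : a ≠ b := by
        have h := he
        rw [hab, SimpleGraph.mem_edgeSet, SimpleGraph.top_adj] at h
        exact h
      by_cases ha0 : a.val = 0
      · have hb0 : b.val ≠ 0 := fun hb => hne (Fin.ext (ha0.trans hb.symm))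
        have hb1 : b.val ≠ 1 := fun hb1 =>
          hx (mem_S_inr ⟨e, he⟩ a b hab (by omega) (by omega))
        have hav : a = v0 := Fin.ext ha0
        exact reachStar ⟨e, he⟩ b (by omega) (by show e = s(v0, b); rw [hab, hav]) hx
      by_cases hb0 : b.val = 0
      · have ha1 : a.val ≠ 1 := fun ha1 =>
          hx (mem_S_inr ⟨e, he⟩ b a (by show e = s(b, a); rw [hab]; exact Sym2.eq_swap) (by omega) (by omega))
        have hbv : b = v0 := Fin.ext hb0
        exact reachStar ⟨e, he⟩ a (by omega)
          (by show e = s(v0, a); rw [hab, hbv]; exact Sym2.eq_swap) hx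
      · obtain ⟨c, hcmem, hc1⟩ : ∃ c : Fin n, (c = a ∨ c = b) ∧ c.val ≠ 1 := by
          by_cases h1 : a.val = 1
          · exact ⟨b, Or.inr rfl, fun hb1 => hne (Fin.ext (h1.trans hb1.symm))⟩
          · exact ⟨a, Or.inl rfl, h1⟩
        have hc0 : c.val ≠ 0 := by
          rcases hcmem with rfl | rfl
          · exact ha0
          · exact hb0
        have hc2 : 2 ≤ c.val := by omega
        set e0c : (⊤ : SimpleGraph (Fin n)).edgeSet :=
          ⟨s(v0, c), hedge _ _ (Fin.ne_of_val_ne (show (0:ℕ) ≠ c.val by omega))⟩ with he0c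
        have h0cc : Sum.inr e0c ∈ (S n)ᶜ := star_not_mem e0c c hc2 rfl
        refine (SimpleGraph.Adj.reachable ?_).trans (reachStar e0c c hc2 rfl h0cc)
        show M.Adj (Sum.inr ⟨e, he⟩) (Sum.inr e0c)
        refine ⟨fun hcontra => ?_, c, ?_, Sym2.mem_mk_right _ _⟩
        · have h' : e = s(v0, c) := congrArg Subtype.val hcontra
          rw [hab, Sym2.eq_iff] at h'
          rcases h' with ⟨h1, _⟩ | ⟨_, h2⟩
          · exact ha0 (congrArg Fin.val h1)
          · exact hb0 (congrArg Fin.val h2)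
        · show c ∈ e
          rw [hab, Sym2.mem_iff]
          exact hcmem
  have : Nonempty ↥((S n)ᶜ) := ⟨x0⟩
  exact ⟨fun x y => (main x).trans (main y).symm⟩

lemma sym2_rep {α : Type*} (e : Sym2 α) : ∃ c d, e = s(c, d) := by
  induction e using Sym2.ind with | _ c d => exact ⟨c, d, rfl⟩

lemma lower (n : ℕ) (T : Set (Fin n ⊕ (⊤ : SimpleGraph (Fin n)).edgeSet))
    (hdom : IsDomSet (middleGraph (⊤ : SimpleGraph (Fin n))) T) :
    (n + 1) / 2 ≤ T.ncard := by
  classical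
  choose f hfT hf using hdom
  set g : Fin n → (Fin n ⊕ (⊤ : SimpleGraph (Fin n)).edgeSet) :=
    fun v => f (Sum.inl v) with hg
  have key : (Finset.univ : Finset (Fin n)).card ≤ 2 * (Finset.univ.image g).card := by
    apply Finset.card_le_mul_card_image
    intro a _
    cases a with
    | inl w =>
      have hsub : (Finset.univ.filter fun v => g v = Sum.inl w) ⊆ {w} := by
        intro v hv
        rw [Finset.mem_filter] at hv
        have h2 := hf (Sum.inl v)
        have hgv : f (Sum.inl v) = Sum.inl w := hv.2
        rw [hgv] at h2
        rcases h2 with h | h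
        · rw [Sum.inl.injEq] at h
          rw [Finset.mem_singleton]
          exact h.symm
        · exact h.elim
      exact le_trans (Finset.card_le_card hsub) (by simp)
    | inr E =>
      obtain ⟨c, d, hcd⟩ := sym2_rep (E : Sym2 (Fin n))
      have hsub : (Finset.univ.filter fun v => g v = Sum.inr E) ⊆ {c, d} := by
        intro v hv
        rw [Finset.mem_filter] at hv
        have h2 := hf (Sum.inl v)
        have hgv : f (Sum.inl v) = Sum.inr E := hv.2
        rw [hgv] at h2
        rcases h2 with h | h
        · exact absurd h (by simp)
        · have hm : v ∈ (E : Sym2 (Fin n)) := h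
          rw [hcd, Sym2.mem_iff] at hm
          simpa using hm
      exact le_trans (Finset.card_le_card hsub) ((Finset.card_insert_le _ _).trans (by simp))
  have hTfin : T.Finite := Set.toFinite T
  have himg : Finset.univ.image g ⊆ hTfin.toFinset := by
    intro x hx
    rw [Finset.mem_image] at hx
    obtain ⟨v, _, rfl⟩ := hx
    rw [Set.Finite.mem_toFinset]
    exact hfT _
  have h2 : (Finset.univ.image g).card ≤ T.ncard := by
    rw [Set.ncard_eq_toFinset_card _ hTfin]
    exact Finset.card_le_card himg
  have h1 : (Finset.univ : Finset (Fin n)).card = n := by simp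
  omega

end Stmt6

theorem stmt6 (n : ℕ) (h3 : 3 ≤ n) :
    outConnDomNum (middleGraph (⊤ : SimpleGraph (Fin n))) = (n + 1) / 2 := by
  apply le_antisymm
  · apply Nat.sInf_le
    exact ⟨Stmt6.S n, Stmt6.dom n, Stmt6.conn n h3, Stmt6.S_ncard n⟩
  · refine le_csInf ⟨(n + 1) / 2, Stmt6.S n, Stmt6.dom n, Stmt6.conn n h3, Stmt6.S_ncard n⟩ ?_
    rintro k ⟨T, hT, hTc, rfl⟩
    exact Stmt6.lower n T hT
end

section
/- For any connected graph G of order n ≥ 2 and any integer p ≥ n, the outer-connected domination number of the middle graph of the join G + K̄_p equals p. -/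
open SimpleGraph

theorem stmt13 {V : Type*} [Fintype V] (G : SimpleGraph V) (n p : ℕ)
    (hn : Fintype.card V = n) (h2 : 2 ≤ n) (hc : G.Connected) (hp : n ≤ p) :
    outConnDomNum (middleGraph (joinEmpty G p)) = p := by
  classical
  set H := joinEmpty G p with hH
  set M := middleGraph H with hM
  -- two distinct vertices of V
  have hVcard : 1 < Fintype.card V := by omega
  obtain ⟨v₀, v₁, hv01⟩ := Fintype.exists_pair_of_one_lt_card hVcard
  have hVpos : 0 < n := by omega
  -- a surjection f : Fin p → V
  let e : Fin n ≃ V := (Fintype.equivFinOfCardEq hn).symm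
  let f : Fin p → V := fun j => e ⟨j.val % n, Nat.mod_lt _ hVpos⟩
  have hf : Function.Surjective f := by
    intro v
    refine ⟨⟨(e.symm v).val, lt_of_lt_of_le (e.symm v).isLt hp⟩, ?_⟩
    have : (⟨(e.symm v).val % n, Nat.mod_lt _ hVpos⟩ : Fin n) = e.symm v := by
      ext; simp [Nat.mod_eq_of_lt (e.symm v).isLt]
    simp only [f, this, Equiv.apply_symm_apply]
  -- cross edges
  have hcross : ∀ (v : V) (j : Fin p), s(Sum.inl v, Sum.inr j) ∈ H.edgeSet := by
    intro v j
    rw [SimpleGraph.mem_edgeSet]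
    exact trivial
  let ej : Fin p → H.edgeSet := fun j => ⟨s(Sum.inl (f j), Sum.inr j), hcross _ j⟩
  let S : Set ((V ⊕ Fin p) ⊕ H.edgeSet) := Set.range (fun j => (Sum.inr (ej j) : (V ⊕ Fin p) ⊕ H.edgeSet))
  have hej_inj : Function.Injective ej := by
    intro j j' h
    have h2' : s(Sum.inl (f j), (Sum.inr j : V ⊕ Fin p)) = s(Sum.inl (f j'), Sum.inr j') :=
      congrArg Subtype.val h
    rw [Sym2.eq_iff] at h2'
    rcases h2' with ⟨h1, hb⟩ | ⟨h1, hb⟩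
    · exact Sum.inr.inj hb
    · simp at h1
  have hScard : S.ncard = p := by
    have hinj : Function.Injective (fun j => (Sum.inr (ej j) : (V ⊕ Fin p) ⊕ H.edgeSet)) :=
      fun a b h => hej_inj (Sum.inr.inj h)
    have : S = (fun j => (Sum.inr (ej j) : (V ⊕ Fin p) ⊕ H.edgeSet)) '' Set.univ := by
      simp [S]
    rw [this, Set.ncard_image_of_injective _ hinj, Set.ncard_univ, Nat.card_eq_fintype_card,
      Fintype.card_fin]
  -- every H-edge contains an inl vertex
  have hedge_inl : ∀ q : H.edgeSet, ∃ v : V, Sum.inl v ∈ (q : Sym2 (V ⊕ Fin p)) := by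
    rintro ⟨q, hq⟩
    induction q using Sym2.inductionOn with
    | hf a b =>
      rw [SimpleGraph.mem_edgeSet] at hq
      match a, b, hq with
      | Sum.inl v, _, _ => exact ⟨v, by simp⟩
      | Sum.inr j, Sum.inl v, _ => exact ⟨v, by simp⟩
  -- S is dominating
  have hdom : IsDomSet M S := by
    rintro (x | q)
    · match x with
      | Sum.inl v =>
        obtain ⟨j, hj⟩ := hf v
        refine ⟨Sum.inr (ej j), ⟨j, rfl⟩, Or.inr ?_⟩
        show Sum.inl v ∈ (ej j : Sym2 (V ⊕ Fin p))
        simp [ej, hj]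
      | Sum.inr j =>
        refine ⟨Sum.inr (ej j), ⟨j, rfl⟩, Or.inr ?_⟩
        show (Sum.inr j : V ⊕ Fin p) ∈ (ej j : Sym2 (V ⊕ Fin p))
        simp [ej]
    · obtain ⟨v, hv⟩ := hedge_inl q
      obtain ⟨j, hj⟩ := hf v
      by_cases hq : ej j = q
      · exact ⟨Sum.inr q, ⟨j, by show Sum.inr (ej j) = Sum.inr q; rw [hq]⟩, Or.inl rfl⟩
      · refine ⟨Sum.inr (ej j), ⟨j, rfl⟩, Or.inr ?_⟩
        show (ej j) ≠ q ∧ ∃ x, x ∈ (ej j : Sym2 (V ⊕ Fin p)) ∧ x ∈ (q : Sym2 (V ⊕ Fin p))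
        exact ⟨hq, Sum.inl v, by simp [ej, hj], hv⟩
  -- all original vertices are in Sᶜ
  have hinl : ∀ x : V ⊕ Fin p, (Sum.inl x : (V ⊕ Fin p) ⊕ H.edgeSet) ∈ Sᶜ := by
    rintro x ⟨j, hj⟩
    simp at hj
  -- G-edges as H-edges
  have hGedge : ∀ {v w : V}, G.Adj v w → s(Sum.inl v, (Sum.inl w : V ⊕ Fin p)) ∈ H.edgeSet := by
    intro v w h
    rw [SimpleGraph.mem_edgeSet]
    exact h
  have hGedge_nS : ∀ {v w : V} (h : G.Adj v w),
      (Sum.inr (⟨s(Sum.inl v, Sum.inl w), hGedge h⟩ : H.edgeSet) : (V ⊕ Fin p) ⊕ H.edgeSet) ∈ Sᶜ := by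
    rintro v w h ⟨j, hj⟩
    simp only [Sum.inr.injEq, S] at hj
    have := congrArg Subtype.val hj
    simp only [ej] at this
    rw [Sym2.eq_iff] at this
    rcases this with ⟨h1, hb⟩ | ⟨h1, hb⟩ <;> simp at hb
  -- cross edge with v ≠ f j is not in S
  have hcross_nS : ∀ (v : V) (j : Fin p), v ≠ f j →
      (Sum.inr (⟨s(Sum.inl v, Sum.inr j), hcross v j⟩ : H.edgeSet) : (V ⊕ Fin p) ⊕ H.edgeSet) ∈ Sᶜ := by
    rintro v j hne ⟨j', hj'⟩
    simp only [Sum.inr.injEq, S] at hj'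
    have := congrArg Subtype.val hj'
    simp only [ej] at this
    rw [Sym2.eq_iff] at this
    rcases this with ⟨h1, hb⟩ | ⟨h1, hb⟩
    · rw [Sum.inr.injEq] at hb
      rw [Sum.inl.injEq] at h1
      exact hne (by rw [← h1, hb])
    · simp at h1
  -- reachability within the induced complement
  have step_vv : ∀ v w : V, G.Adj v w →
      (M.induce Sᶜ).Reachable ⟨Sum.inl (Sum.inl v), hinl _⟩ ⟨Sum.inl (Sum.inl w), hinl _⟩ := by
    intro v w h
    have a1 : (M.induce Sᶜ).Adj ⟨Sum.inl (Sum.inl v), hinl _⟩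
        ⟨Sum.inr ⟨s(Sum.inl v, Sum.inl w), hGedge h⟩, hGedge_nS h⟩ := by
      show (Sum.inl v : V ⊕ Fin p) ∈ s(Sum.inl v, (Sum.inl w : V ⊕ Fin p))
      simp
    have a2 : (M.induce Sᶜ).Adj ⟨Sum.inr ⟨s(Sum.inl v, Sum.inl w), hGedge h⟩, hGedge_nS h⟩
        ⟨Sum.inl (Sum.inl w), hinl _⟩ := by
      show (Sum.inl w : V ⊕ Fin p) ∈ s(Sum.inl v, (Sum.inl w : V ⊕ Fin p))
      simp
    exact a1.reachable.trans a2.reachable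
  have reach_vv : ∀ v w : V,
      (M.induce Sᶜ).Reachable ⟨Sum.inl (Sum.inl v), hinl _⟩ ⟨Sum.inl (Sum.inl w), hinl _⟩ := by
    intro v w
    obtain ⟨walk⟩ := hc.preconnected v w
    induction walk with
    | nil => exact SimpleGraph.Reachable.refl _
    | cons h q ih => exact (step_vv _ _ h).trans ih
  have reach_jv : ∀ j : Fin p,
      (M.induce Sᶜ).Reachable ⟨Sum.inl (Sum.inr j), hinl _⟩ ⟨Sum.inl (Sum.inl v₀), hinl _⟩ := by
    intro j
    obtain ⟨v, hv⟩ : ∃ v : V, v ≠ f j := by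
      by_cases h0 : v₀ = f j
      · exact ⟨v₁, by rw [← h0]; exact fun h => hv01 h.symm⟩
      · exact ⟨v₀, h0⟩
    have a1 : (M.induce Sᶜ).Adj ⟨Sum.inl (Sum.inr j), hinl _⟩
        ⟨Sum.inr ⟨s(Sum.inl v, Sum.inr j), hcross v j⟩, hcross_nS v j hv⟩ := by
      show (Sum.inr j : V ⊕ Fin p) ∈ s(Sum.inl v, (Sum.inr j : V ⊕ Fin p))
      simp
    have a2 : (M.induce Sᶜ).Adj ⟨Sum.inr ⟨s(Sum.inl v, Sum.inr j), hcross v j⟩, hcross_nS v j hv⟩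
        ⟨Sum.inl (Sum.inl v), hinl _⟩ := by
      show (Sum.inl v : V ⊕ Fin p) ∈ s(Sum.inl v, (Sum.inr j : V ⊕ Fin p))
      simp
    exact (a1.reachable.trans a2.reachable).trans (reach_vv v v₀)
  have reach_all : ∀ (w : (V ⊕ Fin p) ⊕ H.edgeSet) (hw : w ∈ Sᶜ),
      (M.induce Sᶜ).Reachable ⟨w, hw⟩ ⟨Sum.inl (Sum.inl v₀), hinl _⟩ := by
    rintro (x | q) hw
    · match x with
      | Sum.inl v => exact reach_vv v v₀
      | Sum.inr j => exact reach_jv j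
    · obtain ⟨v, hv⟩ := hedge_inl q
      have a1 : (M.induce Sᶜ).Adj ⟨Sum.inr q, hw⟩ ⟨Sum.inl (Sum.inl v), hinl _⟩ := by
        show (Sum.inl v : V ⊕ Fin p) ∈ (q : Sym2 (V ⊕ Fin p))
        exact hv
      exact a1.reachable.trans (reach_vv v v₀)
  have hconn : (M.induce Sᶜ).Connected := by
    have hne : Nonempty (Sᶜ : Set ((V ⊕ Fin p) ⊕ H.edgeSet)) := ⟨⟨Sum.inl (Sum.inl v₀), hinl _⟩⟩
    exact SimpleGraph.Connected.mk fun a b => (reach_all a.1 a.2).trans (reach_all b.1 b.2).symm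
  have hmem : p ∈ {k | ∃ T : Set ((V ⊕ Fin p) ⊕ H.edgeSet),
      IsDomSet M T ∧ (M.induce Tᶜ).Connected ∧ T.ncard = k} :=
    ⟨S, hdom, hconn, hScard⟩
  -- lower bound
  have hlow : ∀ k ∈ {k | ∃ T : Set ((V ⊕ Fin p) ⊕ H.edgeSet),
      IsDomSet M T ∧ (M.induce Tᶜ).Connected ∧ T.ncard = k}, p ≤ k := by
    rintro k ⟨T, hdomT, -, rfl⟩
    -- unique inr vertex of an edge
    have huniq : ∀ (q : H.edgeSet) (j j' : Fin p),
        (Sum.inr j : V ⊕ Fin p) ∈ (q : Sym2 (V ⊕ Fin p)) →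
        (Sum.inr j' : V ⊕ Fin p) ∈ (q : Sym2 (V ⊕ Fin p)) → j = j' := by
      rintro ⟨q, hq⟩ j j' hj hj'
      induction q using Sym2.inductionOn with
      | hf a b =>
        rw [SimpleGraph.mem_edgeSet] at hq
        simp only [Sym2.mem_iff] at hj hj'
        match a, b, hq, hj, hj' with
        | Sum.inl v, Sum.inl w, _, hj, _ => exact absurd hj (by simp)
        | Sum.inl v, Sum.inr i, _, hj, hj' =>
          have e1 : j = i := by
            rcases hj with h | h
            · exact absurd h (by simp)
            · exact Sum.inr.inj h
          have e2 : j' = i := by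
            rcases hj' with h | h
            · exact absurd h (by simp)
            · exact Sum.inr.inj h
          rw [e1, e2]
        | Sum.inr i, Sum.inl v, _, hj, hj' =>
          have e1 : j = i := by
            rcases hj with h | h
            · exact Sum.inr.inj h
            · exact absurd h (by simp)
          have e2 : j' = i := by
            rcases hj' with h | h
            · exact Sum.inr.inj h
            · exact absurd h (by simp)
          rw [e1, e2]
        | Sum.inr i, Sum.inr i', hq, _, _ => exact hq.elim
    choose u hu hdu using fun j : Fin p => hdomT (Sum.inl (Sum.inr j))
    have hu_inj : Function.Injective u := by
      intro j j' hjj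
      rcases hdu j with h1 | h1 <;> rcases hdu j' with h2 | h2
      · rw [hjj] at h1; rw [h1] at h2
        exact Sum.inr.inj (Sum.inl.inj h2)
      · rw [← hjj, h1] at h2
        exact False.elim h2
      · rw [hjj, h2] at h1
        exact False.elim h1
      · rw [← hjj] at h2
        match hu' : u j, h1, h2 with
        | Sum.inl x, h1, _ => exact False.elim h1
        | Sum.inr q, h1, h2 => exact huniq q j j' h1 h2
    have hg_inj : Function.Injective (fun j : Fin p => (⟨u j, hu j⟩ : T)) := by
      intro a b hab
      exact hu_inj (congrArg Subtype.val hab)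
    have hle : Nat.card (Fin p) ≤ Nat.card T :=
      Nat.card_le_card_of_injective _ hg_inj
    have hfin : p = Nat.card (Fin p) := (Nat.card_eq_fintype_card.trans (Fintype.card_fin p)).symm
    rw [← Nat.card_coe_set_eq]
    exact le_of_le_of_eq (le_of_eq_of_le hfin hle) rfl
  exact le_antisymm (Nat.sInf_le hmem) (le_csInf ⟨p, hmem⟩ hlow)
end

section
/- Let G be a connected graph with n ≥ 4 vertices that is not a tree. Then n + ⌈n/2⌉ − 1 ≤ γ_c(M(G)) + γ̃_c(M(G)) ≤ 2n − 2 and ⌈n/2⌉(n − 1) ≤ γ_c(M(G)) · γ̃_c(M(G)) ≤ (n − 1)². -/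
open SimpleGraph

section Helpers
variable {V : Type*}

lemma edge_repr (G : SimpleGraph V) (f : G.edgeSet) :
    ∃ a b, G.Adj a b ∧ (f : Sym2 V) = s(a, b) := by
  obtain ⟨e, he⟩ := f
  induction e using Sym2.ind with
  | _ a b => exact ⟨a, b, he, rfl⟩

lemma exists_parent (H : SimpleGraph V) (hH : H.Connected) (r v : V) (hv : v ≠ r) :
    ∃ u, H.Adj v u ∧ H.dist u r < H.dist v r := by
  obtain ⟨p, hp⟩ := (hH.preconnected v r).exists_walk_length_eq_dist
  cases p with
  | nil => exact absurd rfl hv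
  | cons h q =>
    refine ⟨_, h, ?_⟩
    have h1 : H.dist _ r ≤ q.length := SimpleGraph.dist_le q
    have h0 : 0 < H.dist v r := hH.pos_dist_of_ne hv
    simp only [SimpleGraph.Walk.length_cons] at hp
    omega

lemma card_le_edges [Fintype V] (H : SimpleGraph V) (hH : H.Connected) :
    Fintype.card V - 1 ≤ H.edgeSet.ncard := by
  classical
  have : Nonempty V := hH.nonempty
  obtain ⟨r⟩ := this
  choose p hadj hdist using fun v (hv : v ≠ r) => exists_parent H hH r v hv
  set f : V → Sym2 V := fun v => if h : v = r then s(v, v) else s(v, p v h) with hf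
  have hinj : Set.InjOn f {r}ᶜ := by
    intro a ha b hb hab
    simp only [Set.mem_compl_iff, Set.mem_singleton_iff] at ha hb
    simp only [hf, dif_neg ha, dif_neg hb, Sym2.eq_iff] at hab
    rcases hab with ⟨e1, _⟩ | ⟨e1, e2⟩
    · exact e1
    · exfalso
      have d1 := hdist a ha
      have d2 := hdist b hb
      rw [e2] at d1
      rw [← e1] at d2
      omega
  have hsub : f '' {r}ᶜ ⊆ H.edgeSet := by
    rintro x ⟨v, hv, rfl⟩
    simp only [Set.mem_compl_iff, Set.mem_singleton_iff] at hv
    simpa [hf, dif_neg hv] using hadj v hv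
  have h1 : ({r}ᶜ : Set V).ncard = Fintype.card V - 1 := by
    rw [Set.compl_eq_univ_diff, Set.ncard_diff (Set.subset_univ _), Set.ncard_univ,
      Nat.card_eq_fintype_card, Set.ncard_singleton]
  calc Fintype.card V - 1 = ({r}ᶜ : Set V).ncard := h1.symm
    _ = (f '' {r}ᶜ).ncard := (Set.ncard_image_of_injOn hinj).symm
    _ ≤ H.edgeSet.ncard := Set.ncard_le_ncard hsub (Set.toFinite _)


lemma sdiff_connected {V : Type*} {G : SimpleGraph V} (hc : G.Connected) {v w : V}
    (hr : (G \ SimpleGraph.fromEdgeSet {s(v, w)}).Reachable v w) :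
    (G \ SimpleGraph.fromEdgeSet {s(v, w)}).Connected := by
  set G' := G \ SimpleGraph.fromEdgeSet {s(v, w)} with hG'
  have key : ∀ {a b : V}, G.Walk a b → G'.Reachable a b := by
    intro a b p
    induction p with
    | nil => exact SimpleGraph.Reachable.refl _
    | @cons x y z h q ih =>
      refine SimpleGraph.Reachable.trans ?_ ih
      by_cases he : s(x, y) = s(v, w)
      · rw [Sym2.eq_iff] at he
        rcases he with ⟨rfl, rfl⟩ | ⟨rfl, rfl⟩
        · exact hr
        · exact hr.symm
      · exact SimpleGraph.Adj.reachable (by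
          simp only [hG', SimpleGraph.sdiff_adj, SimpleGraph.fromEdgeSet_adj]
          exact ⟨h, fun hh => he hh.1⟩)
  haveI : Nonempty V := hc.nonempty
  refine ⟨fun a b => ?_⟩
  obtain ⟨p⟩ := hc.preconnected a b
  exact key p

/-- Walk translation: a walk in a graph `K` whose edges all lift into `P` gives
reachability between corresponding edge-vertices of the induced middle graph. -/
lemma reach_in_induce {V : Type*} (G : SimpleGraph V) (P : Set (V ⊕ G.edgeSet))
    (K : SimpleGraph V)
    (hK : ∀ a b, K.Adj a b → ∃ f : G.edgeSet, Sum.inr f ∈ P ∧ (f : Sym2 V) = s(a, b)) :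
    ∀ {a b : V} (_ : K.Walk a b) (f : G.edgeSet) (hf : Sum.inr f ∈ P)
      (_ : a ∈ (f : Sym2 V)),
      ∃ (g : G.edgeSet) (hg : Sum.inr g ∈ P), b ∈ (g : Sym2 V) ∧
        ((middleGraph G).induce P).Reachable ⟨Sum.inr f, hf⟩ ⟨Sum.inr g, hg⟩ := by
  intro a b p
  induction p with
  | nil => exact fun f hf ha => ⟨f, hf, ha, SimpleGraph.Reachable.refl _⟩
  | @cons x y z h q ih =>
    intro f hf hx
    obtain ⟨f', hf', hef'⟩ := hK x y h
    have hxf' : x ∈ (f' : Sym2 V) := by rw [hef']; exact Sym2.mem_mk_left x y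
    have hyf' : y ∈ (f' : Sym2 V) := by rw [hef']; exact Sym2.mem_mk_right x y
    obtain ⟨g, hg, hbg, hreach⟩ := ih f' hf' hyf'
    refine ⟨g, hg, hbg, SimpleGraph.Reachable.trans ?_ hreach⟩
    by_cases hff : f = f'
    · subst hff; exact SimpleGraph.Reachable.refl _
    · exact SimpleGraph.Adj.reachable (by
        show (middleGraph G).Adj (Sum.inr f) (Sum.inr f')
        exact ⟨hff, x, hx, hxf'⟩)

end Helpers

lemma connDom_le {V : Type*} [Fintype V] (G : SimpleGraph V) (hc : G.Connected)
    (h2 : 2 ≤ Fintype.card V) :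
    ∃ S : Set (V ⊕ G.edgeSet), IsDomSet (middleGraph G) S ∧
      ((middleGraph G).induce S).Connected ∧ S.ncard = Fintype.card V - 1 := by
  classical
  obtain ⟨r⟩ : Nonempty V := hc.nonempty
  choose p hadj hdist using fun v (hv : v ≠ r) => exists_parent G hc r v hv
  set Ed : ∀ v : V, v ≠ r → G.edgeSet :=
    fun v h => ⟨s(v, p v h), (G.mem_edgeSet).mpr (hadj v h)⟩ with hEd
  have hmeml : ∀ (v) (h : v ≠ r), v ∈ (Ed v h : Sym2 V) := fun v h => Sym2.mem_mk_left _ _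
  have hmemr : ∀ (v) (h : v ≠ r), p v h ∈ (Ed v h : Sym2 V) := fun v h => Sym2.mem_mk_right _ _
  set S : Set (V ⊕ G.edgeSet) := {x | ∃ (v : V) (h : v ≠ r), x = Sum.inr (Ed v h)} with hS
  -- a neighbor of r
  have : ∃ u0, G.Adj r u0 := by
    haveI : Nontrivial V := Fintype.one_lt_card_iff_nontrivial.mp (by omega)
    obtain ⟨v, hv⟩ := exists_ne r
    obtain ⟨q⟩ := hc.preconnected r v
    cases q with
    | nil => exact absurd rfl hv.symm
    | cons h _ => exact ⟨_, h⟩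
  obtain ⟨u0, hu0adj⟩ := this
  have hu0 : u0 ≠ r := fun h => G.loopless.irrefl r (h ▸ hu0adj)
  have hdist1 : ∀ (v) (h : v ≠ r), G.dist v r = 1 → p v h = r := by
    intro v h h1
    have := hdist v h
    rw [h1] at this
    exact (hc.dist_eq_zero_iff).mp (by omega)
  have hu0dist : G.dist u0 r = 1 := SimpleGraph.dist_eq_one_iff_adj.mpr hu0adj.symm
  have hpu0 : p u0 hu0 = r := hdist1 u0 hu0 hu0dist
  have hru0 : r ∈ (Ed u0 hu0 : Sym2 V) := hpu0 ▸ hmemr u0 hu0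
  have hmemS : ∀ (v) (h : v ≠ r), Sum.inr (Ed v h) ∈ S := fun v h => ⟨v, h, rfl⟩
  -- domination
  have hdom : IsDomSet (middleGraph G) S := by
    rintro (v | f)
    · by_cases hv : v = r
      · subst hv
        exact ⟨Sum.inr (Ed u0 hu0), hmemS u0 hu0, Or.inr hru0⟩
      · exact ⟨Sum.inr (Ed v hv), hmemS v hv, Or.inr (hmeml v hv)⟩
    · obtain ⟨a, b, hab, hfab⟩ := edge_repr G f
      have : ∃ c, c ≠ r ∧ c ∈ (f : Sym2 V) := by
        by_cases ha : a = r
        · exact ⟨b, fun hb => hab.ne (ha.trans hb.symm), by rw [hfab]; exact Sym2.mem_mk_right _ _⟩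
        · exact ⟨a, ha, by rw [hfab]; exact Sym2.mem_mk_left _ _⟩
      obtain ⟨c, hcr, hcf⟩ := this
      by_cases hef : Ed c hcr = f
      · exact ⟨Sum.inr (Ed c hcr), hmemS c hcr, Or.inl (by rw [hef])⟩
      · exact ⟨Sum.inr (Ed c hcr), hmemS c hcr,
          Or.inr (show (middleGraph G).Adj (Sum.inr (Ed c hcr)) (Sum.inr f) from
            ⟨hef, c, hmeml c hcr, hcf⟩)⟩
  -- connectivity
  have claim : ∀ (k : ℕ) (v : V) (hvr : v ≠ r), G.dist v r ≤ k →
      ((middleGraph G).induce S).Reachable ⟨Sum.inr (Ed v hvr), hmemS v hvr⟩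
        ⟨Sum.inr (Ed u0 hu0), hmemS u0 hu0⟩ := by
    intro k
    induction k with
    | zero =>
      intro v hvr hd
      exact absurd ((hc.dist_eq_zero_iff).mp (Nat.le_zero.mp hd)) hvr
    | succ k ih =>
      intro v hvr hd
      by_cases hp : p v hvr = r
      · have hrv : r ∈ (Ed v hvr : Sym2 V) := hp ▸ hmemr v hvr
        by_cases heq : Ed v hvr = Ed u0 hu0
        · have : (⟨Sum.inr (Ed v hvr), hmemS v hvr⟩ : ↥S) =
              ⟨Sum.inr (Ed u0 hu0), hmemS u0 hu0⟩ := Subtype.ext (congrArg Sum.inr heq)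
          rw [this]
        · exact SimpleGraph.Adj.reachable
            (show (middleGraph G).Adj (Sum.inr (Ed v hvr)) (Sum.inr (Ed u0 hu0)) from
              ⟨heq, r, hrv, hru0⟩)
      · have hdp : G.dist (p v hvr) r ≤ k := by
          have h1 := hdist v hvr
          omega
        have step : ((middleGraph G).induce S).Reachable ⟨Sum.inr (Ed v hvr), hmemS v hvr⟩
            ⟨Sum.inr (Ed (p v hvr) hp), hmemS _ hp⟩ := by
          by_cases heq : Ed v hvr = Ed (p v hvr) hp
          · have : (⟨Sum.inr (Ed v hvr), hmemS v hvr⟩ : ↥S) =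
                ⟨Sum.inr (Ed (p v hvr) hp), hmemS _ hp⟩ := Subtype.ext (congrArg Sum.inr heq)
            rw [this]
          · exact SimpleGraph.Adj.reachable
              (show (middleGraph G).Adj (Sum.inr (Ed v hvr)) (Sum.inr (Ed (p v hvr) hp)) from
                ⟨heq, p v hvr, hmemr v hvr, hmeml _ hp⟩)
        exact step.trans (ih (p v hvr) hp hdp)
  have hconn : ((middleGraph G).induce S).Connected := by
    haveI : Nonempty ↥S := ⟨⟨Sum.inr (Ed u0 hu0), hmemS u0 hu0⟩⟩
    refine ⟨fun x y => ?_⟩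
    obtain ⟨x, hx⟩ := x
    obtain ⟨y, hy⟩ := y
    obtain ⟨v, hv, rfl⟩ := hx
    obtain ⟨w, hw, rfl⟩ := hy
    exact ((claim _ v hv le_rfl).trans (claim _ w hw le_rfl).symm)
  -- cardinality
  have hcard : S.ncard = Fintype.card V - 1 := by
    set g : V → V ⊕ G.edgeSet := fun v => if h : v = r then Sum.inl v else Sum.inr (Ed v h)
      with hg
    have hSg : S = g '' {r}ᶜ := by
      ext x
      constructor
      · rintro ⟨v, hv, rfl⟩
        exact ⟨v, hv, by simp [hg, dif_neg hv]⟩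
      · rintro ⟨v, hv, rfl⟩
        simp only [Set.mem_compl_iff, Set.mem_singleton_iff] at hv
        exact ⟨v, hv, by simp [hg, dif_neg hv]⟩
    have hinj : Set.InjOn g {r}ᶜ := by
      intro a ha b hb hab
      simp only [Set.mem_compl_iff, Set.mem_singleton_iff] at ha hb
      simp only [hg, dif_neg ha, dif_neg hb] at hab
      have := Sum.inr_injective hab
      have hval : s(a, p a ha) = s(b, p b hb) := congrArg Subtype.val this
      rw [Sym2.eq_iff] at hval
      rcases hval with ⟨e1, _⟩ | ⟨e1, e2⟩
      · exact e1
      · exfalso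
        have d1 := hdist a ha
        have d2 := hdist b hb
        rw [e2] at d1
        rw [← e1] at d2
        omega
    rw [hSg, Set.ncard_image_of_injOn hinj, Set.compl_eq_univ_diff,
      Set.ncard_diff (Set.subset_univ _), Set.ncard_univ, Nat.card_eq_fintype_card,
      Set.ncard_singleton]
  exact ⟨S, hdom, hconn, hcard⟩

lemma connDom_ge {V : Type*} [Fintype V] (G : SimpleGraph V)
    (S : Set (V ⊕ G.edgeSet)) (hdom : IsDomSet (middleGraph G) S)
    (hconn : ((middleGraph G).induce S).Connected) :
    Fintype.card V - 1 ≤ S.ncard := by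
  classical
  set F : Set G.edgeSet := {f | Sum.inr f ∈ S} with hF
  set H : SimpleGraph V := SimpleGraph.fromEdgeSet (Subtype.val '' F) with hH
  have hHadj : ∀ f ∈ F, ∀ a b : V, a ∈ (f : Sym2 V) → b ∈ (f : Sym2 V) → H.Reachable a b := by
    intro f hf a b ha hb
    obtain ⟨c, d, hcd, hfcd⟩ := edge_repr G f
    have hAdj : H.Adj c d := by
      rw [hH, SimpleGraph.fromEdgeSet_adj]
      exact ⟨⟨f, hf, hfcd⟩, hcd.ne⟩
    rw [hfcd, Sym2.mem_iff] at ha hb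
    rcases ha with rfl | rfl <;> rcases hb with rfl | rfl
    · exact SimpleGraph.Reachable.refl _
    · exact hAdj.reachable
    · exact hAdj.symm.reachable
    · exact SimpleGraph.Reachable.refl _
  set touch : V ⊕ G.edgeSet → V → Prop :=
    fun x a => match x with
      | Sum.inl v => v = a
      | Sum.inr f => a ∈ (f : Sym2 V)
    with htouch
  have claim : ∀ (x y : ↥S) (_ : ((middleGraph G).induce S).Walk x y) (a b : V),
      touch x.1 a → touch y.1 b → H.Reachable a b := by
    intro x y q
    induction q with
    | @nil u =>
      rintro a b ha hb
      obtain ⟨xv | xf, hx⟩ := u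
      · exact (ha : xv = a) ▸ (hb : xv = b) ▸ SimpleGraph.Reachable.refl _
      · exact hHadj xf hx a b ha hb
    | @cons u v w h q ih =>
      rintro a b ha hb
      have hadj : (middleGraph G).Adj u.1 v.1 := h
      obtain ⟨uv | uf, hu⟩ := u <;> obtain ⟨vv | vf, hv⟩ := v
      · exact hadj.elim
      · have : a ∈ (vf : Sym2 V) := (ha : uv = a) ▸ hadj
        exact ih a b this hb
      · have hav : H.Reachable a vv := hHadj uf hu a vv ha hadj
        exact hav.trans (ih vv b rfl hb)
      · obtain ⟨hne, c, hc1, hc2⟩ := hadj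
        exact (hHadj uf hu a c ha hc1).trans (ih c b hc2 hb)
  have hHconn : H.Preconnected := by
    intro a b
    have getx : ∀ c : V, ∃ x : ↥S, touch x.1 c := by
      intro c
      obtain ⟨u, hu, hcase⟩ := hdom (Sum.inl c)
      rcases hcase with rfl | hadj
      · exact ⟨⟨Sum.inl c, hu⟩, rfl⟩
      · match u, hadj with
        | Sum.inr f, hadj => exact ⟨⟨Sum.inr f, hu⟩, hadj⟩
    obtain ⟨x, hx⟩ := getx a
    obtain ⟨y, hy⟩ := getx b
    obtain ⟨q⟩ := hconn.preconnected x y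
    exact claim x y q a b hx hy
  rcases Nat.eq_zero_or_pos (Fintype.card V) with h0 | h0
  · simp [h0]
  haveI : Nonempty V := Fintype.card_pos_iff.mp h0
  have hHconn' : H.Connected := ⟨hHconn⟩
  have h1 := card_le_edges H hHconn'
  have h2 : H.edgeSet.ncard ≤ (Subtype.val '' F).ncard := by
    refine Set.ncard_le_ncard ?_ (Set.toFinite _)
    rw [hH, SimpleGraph.edgeSet_fromEdgeSet]
    exact Set.diff_subset
  have h3 : (Subtype.val '' F).ncard = F.ncard :=
    Set.ncard_image_of_injective _ Subtype.val_injective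
  have h4 : F.ncard ≤ S.ncard := by
    have hsub : Sum.inr '' F ⊆ S := by rintro x ⟨f, hf, rfl⟩; exact hf
    calc F.ncard = (Sum.inr '' F).ncard :=
          (Set.ncard_image_of_injective _ Sum.inr_injective).symm
      _ ≤ S.ncard := Set.ncard_le_ncard hsub (Set.toFinite _)
  omega

lemma outConn_ge {V : Type*} [Fintype V] (G : SimpleGraph V)
    (S : Set (V ⊕ G.edgeSet)) (hdom : IsDomSet (middleGraph G) S) :
    Fintype.card V ≤ 2 * S.ncard := by
  classical
  choose d hd1 hd2 using fun v : V => hdom (Sum.inl v)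
  have key : (Finset.univ : Finset V).card ≤ 2 * (Finset.univ.image d).card := by
    refine Finset.card_le_mul_card_image _ 2 ?_
    intro y _
    match y with
    | Sum.inl u =>
      refine (Finset.card_le_card ?_).trans (by simp : ({u} : Finset V).card ≤ 2)
      intro x hx
      simp only [Finset.mem_filter, Finset.mem_univ, true_and] at hx
      have := hd2 x
      rw [hx] at this
      rcases this with h | h
      · simp [Sum.inl.injEq] at h
        simp [h]
      · exact h.elim
    | Sum.inr f =>
      obtain ⟨a, b, hab, hfab⟩ := edge_repr G f
      refine (Finset.card_le_card (t := {a, b}) ?_).trans ?_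
      · intro x hx
        simp only [Finset.mem_filter, Finset.mem_univ, true_and] at hx
        have := hd2 x
        rw [hx] at this
        rcases this with h | h
        · exact absurd h (by simp)
        · have : x ∈ (f : Sym2 V) := h
          rw [hfab, Sym2.mem_iff] at this
          simpa using this
      · exact (Finset.card_insert_le _ _).trans (by simp)
  have himg : Finset.univ.image d ⊆ S.toFinset := by
    intro x hx
    simp only [Finset.mem_image] at hx
    obtain ⟨v, _, rfl⟩ := hx
    simpa using hd1 v
  calc Fintype.card V = (Finset.univ : Finset V).card := (Finset.card_univ).symm
    _ ≤ 2 * (Finset.univ.image d).card := key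
    _ ≤ 2 * S.toFinset.card := by
        have := Finset.card_le_card himg
        omega
    _ = 2 * S.ncard := by rw [Set.ncard_eq_toFinset_card']

lemma outConn_le {V : Type*} [Fintype V] (G : SimpleGraph V) (hc : G.Connected)
    (h4 : 4 ≤ Fintype.card V) {v w : V} (hvw : G.Adj v w)
    (hre : (G \ SimpleGraph.fromEdgeSet {s(v, w)}).Reachable v w) :
    ∃ S : Set (V ⊕ G.edgeSet), IsDomSet (middleGraph G) S ∧
      ((middleGraph G).induce Sᶜ).Connected ∧ S.ncard = Fintype.card V - 1 := by
  classical
  set G' := G \ SimpleGraph.fromEdgeSet {s(v, w)} with hG'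
  have hG'conn : G'.Connected := sdiff_connected hc hre
  have hG'adj : ∀ a b : V, G'.Adj a b ↔ G.Adj a b ∧ s(a, b) ≠ s(v, w) := by
    intro a b
    rw [hG', SimpleGraph.sdiff_adj, SimpleGraph.fromEdgeSet_adj]
    constructor
    · rintro ⟨h1, h2⟩
      exact ⟨h1, fun hh => h2 ⟨by simp [hh], h1.ne⟩⟩
    · rintro ⟨h1, h2⟩
      exact ⟨h1, fun hh => h2 (by simpa using hh.1)⟩
  set e : G.edgeSet := ⟨s(v, w), hvw⟩ with he
  set S : Set (V ⊕ G.edgeSet) :=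
    (Sum.inl '' ({v, w} : Set V)ᶜ) ∪ {Sum.inr e} with hS
  -- membership facts for the complement
  have hvSc : Sum.inl v ∈ Sᶜ := by
    intro h
    rcases h with ⟨u, hu, hinl⟩ | h
    · exact hu (by simpa using (Sum.inl_injective hinl).symm ▸ (by simp : v ∈ ({v, w} : Set V)))
    · simp at h
  have hwSc : Sum.inl w ∈ Sᶜ := by
    intro h
    rcases h with ⟨u, hu, hinl⟩ | h
    · rw [← Sum.inl_injective hinl] at hu
      exact hu (by simp)
    · simp at h
  have hfSc : ∀ f : G.edgeSet, f ≠ e → Sum.inr f ∈ Sᶜ := by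
    intro f hf h
    rcases h with ⟨u, _, hinl⟩ | h
    · exact Sum.inl_ne_inr hinl
    · exact hf (Sum.inr_injective h)
  -- domination
  have hdom : IsDomSet (middleGraph G) S := by
    rintro (u | f)
    · by_cases hu : u ∈ ({v, w} : Set V)
      · refine ⟨Sum.inr e, Or.inr rfl, Or.inr ?_⟩
        show u ∈ (e : Sym2 V)
        rcases hu with rfl | rfl
        · exact Sym2.mem_mk_left _ _
        · exact Sym2.mem_mk_right _ _
      · exact ⟨Sum.inl u, Or.inl ⟨u, hu, rfl⟩, Or.inl rfl⟩
    · by_cases hf : f = e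
      · exact ⟨Sum.inr e, Or.inr rfl, Or.inl (by rw [hf])⟩
      · obtain ⟨a, b, hab, hfab⟩ := edge_repr G f
        have : ∃ c, c ∈ (f : Sym2 V) ∧ c ∉ ({v, w} : Set V) := by
          by_contra hcon
          push_neg at hcon
          have hA := hcon a (by rw [hfab]; exact Sym2.mem_mk_left _ _)
          have hB := hcon b (by rw [hfab]; exact Sym2.mem_mk_right _ _)
          apply hf
          apply Subtype.ext
          rw [hfab]
          simp only [Set.mem_insert_iff, Set.mem_singleton_iff] at hA hB
          rcases hA with rfl | rfl <;> rcases hB with rfl | rfl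
          · exact absurd rfl hab.ne
          · rfl
          · exact Sym2.eq_swap
          · exact absurd rfl hab.ne
        obtain ⟨c, hcf, hcvw⟩ := this
        exact ⟨Sum.inl c, Or.inl ⟨c, hcvw, rfl⟩,
          Or.inr (show c ∈ (f : Sym2 V) from hcf)⟩
  -- neighbors in G'
  have hnbr : ∀ c : V, ∃ u, G'.Adj c u := by
    intro c
    haveI : Nontrivial V := Fintype.one_lt_card_iff_nontrivial.mp (by omega)
    obtain ⟨c', hc'⟩ := exists_ne c
    obtain ⟨q⟩ := hG'conn.preconnected c c'
    cases q with
    | nil => exact absurd rfl hc'.symm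
    | cons h _ => exact ⟨_, h⟩
  have getedge : ∀ c : V, ∃ f : G.edgeSet, f ≠ e ∧ c ∈ (f : Sym2 V) := by
    intro c
    obtain ⟨u, hu⟩ := hnbr c
    rw [hG'adj] at hu
    refine ⟨⟨s(c, u), hu.1⟩, ?_, Sym2.mem_mk_left _ _⟩
    intro hh
    exact hu.2 (congrArg Subtype.val hh)
  -- the walk-translation hypothesis
  have hK : ∀ a b, G'.Adj a b → ∃ f : G.edgeSet, Sum.inr f ∈ Sᶜ ∧ (f : Sym2 V) = s(a, b) := by
    intro a b hab
    rw [hG'adj] at hab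
    refine ⟨⟨s(a, b), hab.1⟩, hfSc _ ?_, rfl⟩
    intro hh
    exact hab.2 (congrArg Subtype.val hh)
  -- reach every edge-vertex of the complement to `Sum.inl v`
  have reachx : ∀ (f : G.edgeSet) (hf : f ≠ e) (a : V), a ∈ (f : Sym2 V) →
      ((middleGraph G).induce Sᶜ).Reachable ⟨Sum.inr f, hfSc f hf⟩ ⟨Sum.inl v, hvSc⟩ := by
    intro f hf a ha
    obtain ⟨q⟩ := hG'conn.preconnected a v
    obtain ⟨g, hg, hvg, hreach⟩ := reach_in_induce G Sᶜ G' hK q f (hfSc f hf) ha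
    refine hreach.trans (SimpleGraph.Adj.reachable ?_)
    show (middleGraph G).Adj (Sum.inr g) (Sum.inl v)
    exact hvg
  have reachall : ∀ x (hx : x ∈ Sᶜ),
      ((middleGraph G).induce Sᶜ).Reachable ⟨x, hx⟩ ⟨Sum.inl v, hvSc⟩ := by
    rintro (u | f) hx
    · obtain ⟨fu, hfu, hufu⟩ := getedge u
      refine (SimpleGraph.Adj.reachable ?_).trans (reachx fu hfu u hufu)
      show (middleGraph G).Adj (Sum.inl u) (Sum.inr fu)
      exact hufu
    · have hf : f ≠ e := fun hh => hx (Or.inr (by simp [hh]))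
      obtain ⟨a, b, hab, hfab⟩ := edge_repr G f
      have ha : a ∈ (f : Sym2 V) := by rw [hfab]; exact Sym2.mem_mk_left _ _
      have : (⟨Sum.inr f, hx⟩ : ↥(Sᶜ)) = ⟨Sum.inr f, hfSc f hf⟩ := rfl
      rw [this]
      exact reachx f hf a ha
  have hconn : ((middleGraph G).induce Sᶜ).Connected := by
    haveI : Nonempty ↥(Sᶜ) := ⟨⟨Sum.inl v, hvSc⟩⟩
    refine ⟨fun x y => ?_⟩
    obtain ⟨x, hx⟩ := x
    obtain ⟨y, hy⟩ := y
    exact (reachall x hx).trans (reachall y hy).symm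
  -- cardinality
  have hcard : S.ncard = Fintype.card V - 1 := by
    rw [hS, Set.ncard_union_eq (by
        rw [Set.disjoint_singleton_right]
        rintro ⟨u, _, hinl⟩
        exact Sum.inl_ne_inr hinl) (Set.toFinite _) (Set.toFinite _)]
    rw [Set.ncard_image_of_injective _ Sum.inl_injective, Set.ncard_singleton]
    have h2 : ({v, w} : Set V).ncard = 2 := by
      rw [Set.ncard_insert_of_notMem (by simpa using hvw.ne), Set.ncard_singleton]
    rw [Set.compl_eq_univ_diff, Set.ncard_diff (Set.subset_univ _), Set.ncard_univ,
      Nat.card_eq_fintype_card, h2]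
    omega
  exact ⟨S, hdom, hconn, hcard⟩


theorem stmt15 {V : Type*} [Fintype V] (G : SimpleGraph V) (n : ℕ)
    (hn : Fintype.card V = n) (h4 : 4 ≤ n) (hc : G.Connected) (ht : ¬ G.IsTree) :
    (n + (n + 1) / 2 - 1 ≤ connDomNum (middleGraph G) + outConnDomNum (middleGraph G) ∧
      connDomNum (middleGraph G) + outConnDomNum (middleGraph G) ≤ 2 * n - 2) ∧
    ((n + 1) / 2 * (n - 1) ≤ connDomNum (middleGraph G) * outConnDomNum (middleGraph G) ∧
      connDomNum (middleGraph G) * outConnDomNum (middleGraph G) ≤ (n - 1) ^ 2) := by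
  classical
  subst hn
  have hacyc : ¬ G.IsAcyclic := fun h => ht ⟨hc, h⟩
  rw [SimpleGraph.isAcyclic_iff_forall_edge_isBridge] at hacyc
  push_neg at hacyc
  obtain ⟨ee, hee, hnb⟩ := hacyc
  induction ee using Sym2.ind with
  | _ v w =>
  have hvw : G.Adj v w := (G.mem_edgeSet).mp hee
  have hre : (G \ SimpleGraph.fromEdgeSet {s(v, w)}).Reachable v w := by
    by_contra h
    exact hnb (SimpleGraph.isBridge_iff.mpr (fun h' => h h'))
  obtain ⟨SA, hA1, hA2, hA3⟩ := connDom_le G hc (by omega)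
  obtain ⟨SC, hC1, hC2, hC3⟩ := outConn_le G hc h4 hvw hre
  have cdl : connDomNum (middleGraph G) ≤ Fintype.card V - 1 :=
    Nat.sInf_le ⟨SA, hA1, hA2, hA3⟩
  have cdg : Fintype.card V - 1 ≤ connDomNum (middleGraph G) := by
    refine le_csInf ⟨_, SA, hA1, hA2, hA3⟩ ?_
    rintro k ⟨S, h1, h2, rfl⟩
    exact connDom_ge G S h1 h2
  have odl : outConnDomNum (middleGraph G) ≤ Fintype.card V - 1 :=
    Nat.sInf_le ⟨SC, hC1, hC2, hC3⟩
  have odg : (Fintype.card V + 1) / 2 ≤ outConnDomNum (middleGraph G) := by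
    refine le_csInf ⟨_, SC, hC1, hC2, hC3⟩ ?_
    rintro k ⟨S, h1, _, rfl⟩
    have := outConn_ge G S h1
    omega
  refine ⟨⟨by omega, by omega⟩, ?_, ?_⟩
  · calc (Fintype.card V + 1) / 2 * (Fintype.card V - 1)
        ≤ outConnDomNum (middleGraph G) * connDomNum (middleGraph G) :=
          Nat.mul_le_mul odg cdg
      _ = connDomNum (middleGraph G) * outConnDomNum (middleGraph G) := mul_comm _ _
  · rw [pow_two]
    exact Nat.mul_le_mul cdl odl
end
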